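/- arXiv:2407.03329 — 11 statements merged into one kernel-verified Lean document; each statement's English description precedes it below -/
import Mathlib

section
/- Let σ: ℝ→ℝ be a nondecreasing sigmoidal function with σ(3)>σ(1) satisfying conditions (Σ1), (Σ2) and (Σ3) with parameter α>0. Then φ_σ(x) = O(|x|^{-(1+α)}) as x→±∞; that is, there exist constants M'>0 and L'>0 such that φ_σ(x) ≤ M'·|x|^{-(1+α)} for all x∈ℝ with |x| > L'. -/
open Filter MeasureTheory Set

noncomputable def phiK (σ : ℝ → ℝ) (x : ℝ) : ℝ := (σ (x + 1) - σ (x - 1)) / 2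

theorem stmt0 (σ : ℝ → ℝ) (α : ℝ)
    (hsig1 : Filter.Tendsto σ Filter.atBot (nhds 0))
    (hsig2 : Filter.Tendsto σ Filter.atTop (nhds 1))
    (hmono : Monotone σ) (h31 : σ 1 < σ 3)
    (hS1 : ∀ x : ℝ, σ (-x) - 1 / 2 = -(σ x - 1 / 2))
    (hS2 : ContDiff ℝ 2 σ ∧ ConcaveOn ℝ (Set.Ici (0 : ℝ)) σ)
    (hα : 0 < α)
    (hS3 : ∃ M > (0 : ℝ), ∃ L > (0 : ℝ), ∀ x : ℝ, x ≤ -L → σ x ≤ M * |x| ^ (-(1 + α))) :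
    ∃ M' > (0 : ℝ), ∃ L' > (0 : ℝ), ∀ x : ℝ, L' < |x| →
      phiK σ x ≤ M' * |x| ^ (-(1 + α)) := by
  obtain ⟨M, hM, L, hL, hbound⟩ := hS3
  have hneg : ∀ x : ℝ, σ (-x) = 1 - σ x := fun x => by have := hS1 x; linarith
  have hsymm : ∀ x : ℝ, phiK σ (-x) = phiK σ x := by
    intro x
    have e1 : -x + 1 = -(x - 1) := by ring
    have e2 : -x - 1 = -(x + 1) := by ring
    simp only [phiK, e1, e2, hneg]
    ring
  have h2pos : (0:ℝ) < (2:ℝ) ^ α := Real.rpow_pos_of_pos two_pos α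
  have key : ∀ x : ℝ, x ≤ -(max (L + 1) 2) →
      phiK σ x ≤ M * 2 ^ α * |x| ^ (-(1 + α)) := by
    intro x hx
    have hx2 : x ≤ -2 := by have := le_max_right (L + 1) 2; linarith
    have hxL : x + 1 ≤ -L := by have := le_max_left (L + 1) 2; linarith
    have h1 : σ (x + 1) ≤ M * |x + 1| ^ (-(1 + α)) := hbound _ hxL
    have h0 : 0 ≤ σ (x - 1) :=
      le_of_tendsto hsig1 (Filter.eventually_atBot.2 ⟨x - 1, fun t ht => hmono ht⟩)
    have habs : |x| = -x := abs_of_nonpos (by linarith)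
    have habs1 : |x + 1| = -(x + 1) := abs_of_nonpos (by linarith)
    have hhalf : (0:ℝ) < |x| / 2 := by rw [habs]; linarith
    have hle : |x| / 2 ≤ |x + 1| := by rw [habs, habs1]; linarith
    have hrp : |x + 1| ^ (-(1 + α)) ≤ (|x| / 2) ^ (-(1 + α)) :=
      Real.rpow_le_rpow_of_nonpos hhalf hle (by linarith)
    have hxpos : (0:ℝ) < |x| := by linarith
    have hdiv : (|x| / 2) ^ (-(1 + α)) = 2 ^ (1 + α) * |x| ^ (-(1 + α)) := by
      rw [Real.div_rpow hxpos.le (by norm_num : (0:ℝ) ≤ 2),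
        Real.rpow_neg hxpos.le, Real.rpow_neg (by norm_num : (0:ℝ) ≤ 2)]
      field_simp
    have h2a : (2:ℝ) ^ (1 + α) = 2 * 2 ^ α := by
      rw [Real.rpow_add two_pos, Real.rpow_one]
    have hxa : (0:ℝ) < |x| ^ (-(1 + α)) := Real.rpow_pos_of_pos hxpos _
    have hfin : σ (x + 1) ≤ 2 * (M * 2 ^ α) * |x| ^ (-(1 + α)) := by
      calc σ (x + 1) ≤ M * |x + 1| ^ (-(1 + α)) := h1
        _ ≤ M * ((|x| / 2) ^ (-(1 + α))) := by
            exact mul_le_mul_of_nonneg_left hrp hM.le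
        _ = 2 * (M * 2 ^ α) * |x| ^ (-(1 + α)) := by rw [hdiv, h2a]; ring
    have : phiK σ x ≤ σ (x + 1) / 2 := by unfold phiK; linarith
    linarith
  refine ⟨M * 2 ^ α, by positivity, max (L + 1) 2, by positivity, fun x hx => ?_⟩
  rcases le_or_gt x 0 with hx0 | hx0
  · have : x ≤ -(max (L + 1) 2) := by
      have := abs_of_nonpos hx0; linarith
    exact key x this
  · have habs : |x| = x := abs_of_pos hx0
    have h1 : -x ≤ -(max (L + 1) 2) := by linarith [habs ▸ hx]
    have := key (-x) h1
    rw [hsymm, abs_neg, habs] at this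
    rw [habs]; exact this
end

section
/- Let σ: ℝ→ℝ be a nondecreasing sigmoidal function. Then for every x∈ℝ, the series ∑_{k∈ℤ} φ_σ(x-k) converges and equals 1. -/
open Filter MeasureTheory Set

theorem stmt2 (σ : ℝ → ℝ)
    (hsig1 : Filter.Tendsto σ Filter.atBot (nhds 0))
    (hsig2 : Filter.Tendsto σ Filter.atTop (nhds 1))
    (hmono : Monotone σ) :
    ∀ x : ℝ, HasSum (fun k : ℤ => phiK σ (x - (k : ℝ))) 1 := by
  intro x
  -- F k = (σ (x - k + 1) + σ (x - k)) / 2, so that phiK σ (x - k) = F k - F (k+1)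
  set F : ℤ → ℝ := fun k => (σ (x - k + 1) + σ (x - k)) / 2 with hF
  have key : ∀ k : ℤ, phiK σ (x - (k : ℝ)) = F k - F (k + 1) := by
    intro k
    simp only [hF, phiK, Int.cast_add, Int.cast_one]
    ring_nf
  have hnonneg : ∀ k : ℤ, 0 ≤ phiK σ (x - (k : ℝ)) := by
    intro k
    have := hmono (show x - (k : ℝ) - 1 ≤ x - (k : ℝ) + 1 by linarith)
    simp only [phiK]; linarith
  -- limits of F
  have hcast : Tendsto (fun n : ℕ => (n : ℝ)) atTop atTop := tendsto_natCast_atTop_atTop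
  have hFtop : Tendsto (fun n : ℕ => F n) atTop (nhds 0) := by
    have h1 : Tendsto (fun n : ℕ => x - n + 1) atTop atBot := by
      apply tendsto_atBot_add_const_right
      apply tendsto_atBot_add_const_left
      exact tendsto_neg_atBot_iff.mpr hcast
    have h2 : Tendsto (fun n : ℕ => x - n) atTop atBot := by
      apply tendsto_atBot_add_const_left
      exact tendsto_neg_atBot_iff.mpr hcast
    have := ((hsig1.comp h1).add (hsig1.comp h2)).div_const 2
    simpa [hF] using this
  have hFbot : Tendsto (fun n : ℕ => F (-(n:ℤ))) atTop (nhds 1) := by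
    have h1 : Tendsto (fun n : ℕ => x + n + 1) atTop atTop := by
      apply tendsto_atTop_add_const_right
      exact tendsto_atTop_add_const_left _ _ hcast
    have h2 : Tendsto (fun n : ℕ => x + n) atTop atTop :=
      tendsto_atTop_add_const_left _ _ hcast
    have := ((hsig2.comp h1).add (hsig2.comp h2)).div_const 2
    have h : Tendsto (fun n : ℕ => (σ (x + n + 1) + σ (x + n)) / 2) atTop (nhds 1) := by
      convert this using 2 <;> norm_num
    refine h.congr (fun n => ?_)
    simp only [hF, Int.cast_neg, Int.cast_natCast]
    ring_nf
  -- sum over nonnegative integers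
  have hnat : HasSum (fun n : ℕ => phiK σ (x - ((n : ℤ) : ℝ))) (F 0) := by
    rw [hasSum_iff_tendsto_nat_of_nonneg (fun n => hnonneg n)]
    have : ∀ n : ℕ, ∑ i ∈ Finset.range n, phiK σ (x - ((i : ℤ) : ℝ)) = F 0 - F n := by
      intro n
      have := Finset.sum_range_sub' (fun i : ℕ => F i) n
      simp only [Nat.cast_zero, neg_zero] at this
      rw [← this]
      apply Finset.sum_congr rfl
      intro i _
      rw [key i]
      norm_num
    simp only [this]
    simpa using (tendsto_const_nhds.sub hFtop)
  -- sum over negative integers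
  have hneg : HasSum (fun n : ℕ => phiK σ (x - ((-(n:ℤ) - 1 : ℤ) : ℝ))) (1 - F 0) := by
    rw [hasSum_iff_tendsto_nat_of_nonneg (fun n => hnonneg _)]
    have : ∀ n : ℕ, ∑ i ∈ Finset.range n, phiK σ (x - ((-(i:ℤ) - 1 : ℤ) : ℝ)) =
        F (-(n:ℤ)) - F 0 := by
      intro n
      have := Finset.sum_range_sub (fun i : ℕ => F (-(i:ℤ))) n
      simp only [Nat.cast_zero, neg_zero] at this
      rw [← this]
      apply Finset.sum_congr rfl
      intro i _
      rw [key (-(i:ℤ) - 1)]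
      have : (-(i:ℤ) - 1) + 1 = -(i:ℤ) := by ring
      rw [this]
      push_cast
      ring_nf
    simp only [this]
    simpa using (hFbot.sub tendsto_const_nhds)
  have := HasSum.of_nat_of_neg_add_one (f := fun k : ℤ => phiK σ (x - (k : ℝ)))
    hnat (by simpa [show ∀ n : ℕ, -((n:ℤ)+1) = -(n:ℤ)-1 by intro n; ring] using hneg)
  simpa using this
end

section
/- Let σ: ℝ→ℝ be a nondecreasing sigmoidal function with σ(3)>σ(1) satisfying conditions (Σ1), (Σ2) and (Σ3) with parameter α>0. Then 0 ≤ φ_σ(x) ≤ 1/2 for all x∈ℝ, and φ_σ belongs to L¹(ℝ), i.e. ∫_ℝ φ_σ(x) dx < ∞. -/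
open Filter MeasureTheory Set

lemma aux_Iio_rpow {a c : ℝ} (ha : a < -1) (hc : 0 < c) :
    IntegrableOn (fun x : ℝ => |x| ^ a) (Iio (-c)) := by
  rw [← (Measure.measurePreserving_neg (volume : Measure ℝ)).integrableOn_comp_preimage
      (Homeomorph.neg ℝ).measurableEmbedding]
  simp only [Function.comp_def, abs_neg, neg_preimage, neg_Iio, neg_neg]
  exact (integrableOn_Ioi_rpow_of_lt ha hc).congr_fun
    (fun x hx => by rw [abs_of_pos (hc.trans hx)]) measurableSet_Ioi

theorem stmt3 (σ : ℝ → ℝ) (α : ℝ)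
    (hsig1 : Filter.Tendsto σ Filter.atBot (nhds 0))
    (hsig2 : Filter.Tendsto σ Filter.atTop (nhds 1))
    (hmono : Monotone σ) (h31 : σ 1 < σ 3)
    (hS1 : ∀ x : ℝ, σ (-x) - 1 / 2 = -(σ x - 1 / 2))
    (hS2 : ContDiff ℝ 2 σ ∧ ConcaveOn ℝ (Set.Ici (0 : ℝ)) σ)
    (hα : 0 < α)
    (hS3 : ∃ M > (0 : ℝ), ∃ L > (0 : ℝ), ∀ x : ℝ, x ≤ -L → σ x ≤ M * |x| ^ (-(1 + α))) :
    (∀ x : ℝ, 0 ≤ phiK σ x ∧ phiK σ x ≤ 1 / 2) ∧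
      MeasureTheory.Integrable (phiK σ) := by
  obtain ⟨M, hM, L, hL, hS3⟩ := hS3
  have hσ0 : ∀ x, 0 ≤ σ x := fun x => hmono.le_of_tendsto hsig1 x
  have hσ1 : ∀ x, σ x ≤ 1 := fun x => hmono.ge_of_tendsto hsig2 x
  have hbnd : ∀ x : ℝ, 0 ≤ phiK σ x ∧ phiK σ x ≤ 1 / 2 := by
    intro x
    constructor
    · have : σ (x - 1) ≤ σ (x + 1) := hmono (by linarith)
      unfold phiK; linarith
    · have h1 := hσ1 (x + 1)
      have h2 := hσ0 (x - 1)
      unfold phiK; linarith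
  refine ⟨hbnd, ?_⟩
  -- continuity
  have hcσ : Continuous σ := hS2.1.continuous
  have hcφ : Continuous (phiK σ) := by
    unfold phiK
    fun_prop
  -- reflection
  have hrefl : ∀ y : ℝ, σ (-y) = 1 - σ y := by
    intro y; have := hS1 y; linarith
  set c : ℝ := max L 1 + 1 with hc
  have hc0 : (0 : ℝ) < c := by positivity
  have hcL : L + 1 ≤ c := by have := le_max_left L 1; linarith
  have hc2 : (2 : ℝ) ≤ c := by have := le_max_right L 1; linarith
  have hexp : -(1 + α) < -1 := by linarith
  have hexp0 : -(1 + α) ≤ 0 := by linarith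
  -- constant
  set C : ℝ := (M / 2) * 2 ^ (1 + α) with hC
  rw [← integrableOn_univ, ← Iio_union_Ici (a := -c), integrableOn_union,
    ← Icc_union_Ioi_eq_Ici (by linarith : -c ≤ c), integrableOn_union]
  refine ⟨?_, hcφ.integrableOn_Icc, ?_⟩
  · -- left tail
    refine Integrable.mono' (((aux_Iio_rpow hexp hc0).const_mul C)) 
      (hcφ.aestronglyMeasurable.restrict) ?_
    filter_upwards [ae_restrict_mem measurableSet_Iio] with x (hx : x < -c)
    have hx2 : x ≤ -2 := by linarith
    have hxL : x + 1 ≤ -L := by have := le_max_left L 1; linarith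
    have habs : |x| / 2 ≤ |x + 1| := by
      rw [abs_of_nonpos (by linarith), abs_of_nonpos (by linarith)]; linarith
    have habs0 : 0 < |x| / 2 := by
      rw [abs_of_nonpos (by linarith)]; linarith
    have h1 : σ (x + 1) ≤ M * |x + 1| ^ (-(1 + α)) := hS3 _ hxL
    have h2 : |x + 1| ^ (-(1 + α)) ≤ (|x| / 2) ^ (-(1 + α)) :=
      Real.rpow_le_rpow_of_nonpos habs0 habs hexp0
    have h3 : (|x| / 2) ^ (-(1 + α)) = 2 ^ (1 + α) * |x| ^ (-(1 + α)) := by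
      rw [Real.div_rpow (abs_nonneg x) (by norm_num), Real.rpow_neg (by norm_num : (0:ℝ) ≤ 2)]
      field_simp
    rw [Real.norm_eq_abs, abs_of_nonneg (hbnd x).1]
    have hσx1 : 0 ≤ σ (x - 1) := hσ0 _
    have : phiK σ x ≤ σ (x + 1) / 2 := by unfold phiK; linarith
    have hMa : M * |x + 1| ^ (-(1 + α)) ≤ M * (2 ^ (1 + α) * |x| ^ (-(1 + α))) := by
      rw [← h3]; exact mul_le_mul_of_nonneg_left (h2.trans_eq rfl |>.trans (le_of_eq rfl)) hM.le
    calc phiK σ x ≤ σ (x + 1) / 2 := this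
      _ ≤ (M * (2 ^ (1 + α) * |x| ^ (-(1 + α)))) / 2 := by linarith
      _ = C * |x| ^ (-(1 + α)) := by rw [hC]; ring
  · -- right tail
    have hint : IntegrableOn (fun x : ℝ => C * x ^ (-(1 + α))) (Ioi c) :=
      (integrableOn_Ioi_rpow_of_lt hexp hc0).const_mul C
    refine Integrable.mono' hint (hcφ.aestronglyMeasurable.restrict) ?_
    filter_upwards [ae_restrict_mem measurableSet_Ioi] with x (hx : c < x)
    have hx2 : 2 ≤ x := by linarith
    have hxL : 1 - x ≤ -L := by have := le_max_left L 1; linarith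
    have h1 : σ (1 - x) ≤ M * |1 - x| ^ (-(1 + α)) := hS3 _ hxL
    have hσr : σ (1 - x) = 1 - σ (x - 1) := by
      have := hrefl (x - 1); rw [show -(x - 1) = 1 - x by ring] at this; linarith
    have habs : x / 2 ≤ |1 - x| := by
      rw [abs_of_nonpos (by linarith)]; linarith
    have habs0 : 0 < x / 2 := by linarith
    have h2 : |1 - x| ^ (-(1 + α)) ≤ (x / 2) ^ (-(1 + α)) :=
      Real.rpow_le_rpow_of_nonpos habs0 habs hexp0
    have h3 : (x / 2) ^ (-(1 + α)) = 2 ^ (1 + α) * x ^ (-(1 + α)) := by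
      rw [Real.div_rpow (by linarith) (by norm_num), Real.rpow_neg (by norm_num : (0:ℝ) ≤ 2)]
      field_simp
    rw [Real.norm_eq_abs, abs_of_nonneg (hbnd x).1]
    have hσx1 : σ (x + 1) ≤ 1 := hσ1 _
    have hφle : phiK σ x ≤ σ (1 - x) / 2 := by unfold phiK; rw [hσr]; linarith
    have h4 : M * |1 - x| ^ (-(1 + α)) ≤ M * (2 ^ (1 + α) * x ^ (-(1 + α))) := by
      rw [← h3]; exact mul_le_mul_of_nonneg_left h2 hM.le
    calc phiK σ x ≤ σ (1 - x) / 2 := hφle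
      _ ≤ (M * (2 ^ (1 + α) * x ^ (-(1 + α)))) / 2 := by linarith
      _ = C * x ^ (-(1 + α)) := by rw [hC]; ring
end

section
/- Let σ: ℝ→ℝ be a nondecreasing sigmoidal function with σ(3)>σ(1) satisfying conditions (Σ1) and (Σ2). Then φ_σ(2) > 0, and for every x∈ℝ and every n∈ℕ, the supremum over k∈ℤ of φ_σ(nx-k) satisfies sup_{k∈ℤ} φ_σ(nx-k) ≥ φ_σ(2). -/
open Filter MeasureTheory Set

theorem stmt4 (σ : ℝ → ℝ)
    (hsig1 : Filter.Tendsto σ Filter.atBot (nhds 0))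
    (hsig2 : Filter.Tendsto σ Filter.atTop (nhds 1))
    (hmono : Monotone σ) (h31 : σ 1 < σ 3)
    (hS1 : ∀ x : ℝ, σ (-x) - 1 / 2 = -(σ x - 1 / 2))
    (hS2 : ContDiff ℝ 2 σ ∧ ConcaveOn ℝ (Set.Ici (0 : ℝ)) σ) :
    0 < phiK σ 2 ∧
      ∀ (x : ℝ) (n : ℕ), phiK σ 2 ≤ ⨆ k : ℤ, phiK σ ((n : ℝ) * x - (k : ℝ)) := by
  have hconc := hS2.2
  -- σ 0 = 1/2
  have h0 : σ 0 = 1 / 2 := by have := hS1 0; rw [neg_zero] at this; linarith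
  -- neg formula
  have hneg : ∀ x : ℝ, σ (-x) = 1 - σ x := by intro x; have := hS1 x; linarith
  -- σ bounded
  have hle1 : ∀ y : ℝ, σ y ≤ 1 := fun y => hmono.ge_of_tendsto hsig2 y
  have hge0 : ∀ y : ℝ, 0 ≤ σ y := fun y => hmono.le_of_tendsto hsig1 y
  -- evenness of phiK
  have heven : ∀ t : ℝ, phiK σ (-t) = phiK σ t := by
    intro t
    have h1 : (-t + 1 : ℝ) = -(t - 1) := by ring
    have h2 : (-t - 1 : ℝ) = -(t + 1) := by ring
    simp only [phiK, h1, h2, hneg]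
    ring
  -- key inequality for t ∈ [0, 1/2]
  have key : ∀ t : ℝ, 0 ≤ t → t ≤ 1 / 2 → phiK σ 2 ≤ phiK σ t := by
    intro t ht0 ht
    have m0 : (0 : ℝ) ∈ Set.Ici (0 : ℝ) := by norm_num
    have m3 : (3 : ℝ) ∈ Set.Ici (0 : ℝ) := by norm_num
    have m1 : (1 : ℝ) ∈ Set.Ici (0 : ℝ) := by norm_num
    -- C1 : σ 1 ≥ (2/3) σ 0 + (1/3) σ 3
    have C1 := hconc.2 m0 m3 (by norm_num : (0:ℝ) ≤ 2/3) (by norm_num : (0:ℝ) ≤ 1/3)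
      (by norm_num)
    have C1' : 2 / 3 * σ 0 + 1 / 3 * σ 3 ≤ σ 1 := by
      have : ((2:ℝ)/3) • (0:ℝ) + ((1:ℝ)/3) • (3:ℝ) = 1 := by norm_num
      simpa [this, smul_eq_mul] using C1
    -- C2 : σ (t+1) ≥ ((2-t)/3) σ 0 + ((1+t)/3) σ 3
    have C2 := hconc.2 m0 m3 (by linarith : (0:ℝ) ≤ (2 - t)/3)
      (by linarith : (0:ℝ) ≤ (1 + t)/3) (by ring)
    have C2' : (2 - t) / 3 * σ 0 + (1 + t) / 3 * σ 3 ≤ σ (t + 1) := by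
      have hpt : ((2 - t)/3) • (0:ℝ) + ((1 + t)/3) • (3:ℝ) = t + 1 := by
        simp only [smul_eq_mul]; ring
      rw [hpt] at C2
      have := C2
      simp only [smul_eq_mul] at this
      linarith
    -- C3 : σ (1-t) ≥ t σ 0 + (1-t) σ 1
    have C3 := hconc.2 m0 m1 ht0 (by linarith : (0:ℝ) ≤ 1 - t) (by ring)
    have C3' : t * σ 0 + (1 - t) * σ 1 ≤ σ (1 - t) := by
      have hpt : t • (0:ℝ) + (1 - t) • (1:ℝ) = 1 - t := by
        simp only [smul_eq_mul]; ring
      simpa [hpt, smul_eq_mul] using C3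
    have hQ : 0 ≤ (2 - t) * (3 * σ 1 - 1 - σ 3) := by
      apply mul_nonneg (by linarith)
      have := C1'; rw [h0] at this; linarith
    have ht1 : σ (t - 1) = 1 - σ (1 - t) := by
      have : (t - 1 : ℝ) = -(1 - t) := by ring
      rw [this, hneg]
    simp only [phiK, ht1]
    rw [h0] at C2' C3'
    have h21 : (2:ℝ) + 1 = 3 := by norm_num
    have h2m1 : (2:ℝ) - 1 = 1 := by norm_num
    rw [h21, h2m1]
    nlinarith [hQ, C2', C3']
  -- combine : for |t| ≤ 1/2
  have key' : ∀ t : ℝ, |t| ≤ 1 / 2 → phiK σ 2 ≤ phiK σ t := by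
    intro t ht
    rcases le_or_gt 0 t with h | h
    · exact key t h (by rwa [abs_of_nonneg h] at ht)
    · rw [← heven t]
      exact key (-t) (by linarith) (by rw [abs_of_neg h] at ht; linarith)
  constructor
  · simp only [phiK]
    have h21 : (2:ℝ) + 1 = 3 := by norm_num
    have h2m1 : (2:ℝ) - 1 = 1 := by norm_num
    rw [h21, h2m1]; linarith
  · intro x n
    have hbdd : BddAbove (Set.range fun k : ℤ => phiK σ ((n : ℝ) * x - (k : ℝ))) := by
      refine ⟨1 / 2, ?_⟩
      rintro y ⟨k, rfl⟩
      simp only [phiK]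
      have := hle1 ((n : ℝ) * x - (k : ℝ) + 1)
      have := hge0 ((n : ℝ) * x - (k : ℝ) - 1)
      linarith
    have hk : phiK σ 2 ≤ phiK σ ((n : ℝ) * x - (round ((n : ℝ) * x) : ℤ)) := by
      apply key'
      simpa using abs_sub_round ((n : ℝ) * x)
    exact hk.trans (le_ciSup hbdd (round ((n : ℝ) * x)))
end

section
/- Let σ: ℝ→ℝ be a nondecreasing sigmoidal function with σ(3)>σ(1) satisfying conditions (Σ1) and (Σ2), and let a<b be real numbers. Then φ_σ(2) > 0, and there exists N∈ℕ such that for all n ≥ N and all x∈[a,b], the maximum over the integers k with ⌈na⌉ ≤ k ≤ ⌊nb⌋-1 satisfies max_{k=⌈na⌉}^{⌊nb⌋-1} φ_σ(nx-k) ≥ φ_σ(2). -/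
open Filter MeasureTheory Set

lemma concave_sum (σ : ℝ → ℝ) (hc : ConcaveOn ℝ (Set.Ici (0 : ℝ)) σ)
    {u x y v : ℝ} (hu : 0 ≤ u) (hux : u ≤ x) (hxy : x ≤ y) (hyv : y ≤ v)
    (hsum : x + y = u + v) : σ u + σ v ≤ σ x + σ y := by
  rcases eq_or_lt_of_le (le_trans hux (le_trans hxy hyv)) with h | h
  · have hxu : x = u := le_antisymm (by linarith) hux
    have hyu : y = v := by linarith
    rw [hxu, hyu]
  · have hvu : (0:ℝ) < v - u := by linarith
    have humem : u ∈ Set.Ici (0:ℝ) := hu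
    have hvmem : v ∈ Set.Ici (0:ℝ) := by simp; linarith
    have h1 : σ ((( v - x)/(v-u)) • u + ((x - u)/(v-u)) • v) ≥
        ((v - x)/(v-u)) * σ u + ((x - u)/(v-u)) * σ v :=
      hc.2 humem hvmem (div_nonneg (by linarith) (by linarith))
        (div_nonneg (by linarith) (by linarith)) (by rw [← add_div, div_eq_one_iff_eq (ne_of_gt hvu)]; ring)
    have h2 : σ (((v - y)/(v-u)) • u + ((y - u)/(v-u)) • v) ≥
        ((v - y)/(v-u)) * σ u + ((y - u)/(v-u)) * σ v :=
      hc.2 humem hvmem (div_nonneg (by linarith) (by linarith))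
        (div_nonneg (by linarith) (by linarith)) (by rw [← add_div, div_eq_one_iff_eq (ne_of_gt hvu)]; ring)
    have e1 : ((v - x)/(v-u)) • u + ((x - u)/(v-u)) • v = x := by
      simp only [smul_eq_mul]; rw [div_mul_eq_mul_div, div_mul_eq_mul_div, ← add_div, div_eq_iff (ne_of_gt hvu)]; ring
    have e2 : ((v - y)/(v-u)) • u + ((y - u)/(v-u)) • v = y := by
      simp only [smul_eq_mul]; rw [div_mul_eq_mul_div, div_mul_eq_mul_div, ← add_div, div_eq_iff (ne_of_gt hvu)]; ring
    rw [e1] at h1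
    rw [e2] at h2
    have hid : (v - x)/(v-u) * σ u + (x - u)/(v-u) * σ v +
        ((v - y)/(v-u) * σ u + (y - u)/(v-u) * σ v) = σ u + σ v := by
      have hv : v = x + y - u := by linarith
      subst hv
      field_simp
      ring
    linarith

theorem stmt5 (σ : ℝ → ℝ) (a b : ℝ) (hab : a < b)
    (hsig1 : Filter.Tendsto σ Filter.atBot (nhds 0))
    (hsig2 : Filter.Tendsto σ Filter.atTop (nhds 1))
    (hmono : Monotone σ) (h31 : σ 1 < σ 3)
    (hS1 : ∀ x : ℝ, σ (-x) - 1 / 2 = -(σ x - 1 / 2))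
    (hS2 : ContDiff ℝ 2 σ ∧ ConcaveOn ℝ (Set.Ici (0 : ℝ)) σ) :
    0 < phiK σ 2 ∧
      ∃ N : ℕ, ∀ n : ℕ, N ≤ n → ∀ x ∈ Set.Icc a b,
        phiK σ 2 ≤ sSup {z : ℝ | ∃ k : ℤ, ⌈(n : ℝ) * a⌉ ≤ k ∧ k ≤ ⌊(n : ℝ) * b⌋ - 1 ∧
          z = phiK σ ((n : ℝ) * x - (k : ℝ))} := by
  obtain ⟨-, hconc⟩ := hS2
  have hσ1 : ∀ x : ℝ, σ x ≤ 1 := fun x => hmono.ge_of_tendsto hsig2 x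
  have hσ0 : ∀ x : ℝ, 0 ≤ σ x := fun x => hmono.le_of_tendsto hsig1 x
  -- evenness of phiK
  have heven : ∀ t : ℝ, phiK σ (-t) = phiK σ t := by
    intro t
    have h1 := hS1 (t - 1)
    have h2 := hS1 (t + 1)
    have e1 : -t + 1 = -(t - 1) := by ring
    have e2 : -t - 1 = -(t + 1) := by ring
    simp only [phiK, e1, e2]
    linarith
  -- key pointwise bound
  have hkey : ∀ t : ℝ, |t| ≤ 2 → phiK σ 2 ≤ phiK σ t := by
    have hpos : ∀ t : ℝ, 0 ≤ t → t ≤ 2 → phiK σ 2 ≤ phiK σ t := by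
      intro t ht0 ht2
      rcases le_total t 1 with h1 | h1
      · -- u = 0, x = 1 - t, y = 1 + t, v = 2
        have := concave_sum σ hconc (u := 0) (x := 1 - t) (y := 1 + t) (v := 2)
          le_rfl (by linarith) (by linarith) (by linarith) (by ring)
        -- σ 0 + σ 2 ≤ σ (1-t) + σ (1+t)
        have hσ02 : σ 0 = 1/2 := by have := hS1 0; norm_num at this; linarith
        -- relate σ(t-1) = 1 - σ(1-t)
        have hm := hS1 (1 - t)
        have e : -(1 - t) = t - 1 := by ring
        rw [e] at hm
        -- σ 3 ≥ σ 2? no, need phiK 2 = (σ3 - σ1)/2 ≤ (σ(t+1) - σ(t-1))/2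
        have h2' := concave_sum σ hconc (u := 0) (x := 1) (y := 2) (v := 3)
          le_rfl (by norm_num) (by norm_num) (by norm_num) (by ring)
        simp only [phiK]
        have ea : t + 1 = 1 + t := by ring
        rw [ea]
        norm_num
        linarith
      · -- u = t - 1, x = 1, y = t + 1, v = 3
        have := concave_sum σ hconc (u := t - 1) (x := 1) (y := t + 1) (v := 3)
          (by linarith) (by linarith) (by linarith) (by linarith) (by ring)
        simp only [phiK]
        norm_num
        linarith
    intro t ht
    rcases abs_le.1 ht with ⟨hl, hr⟩
    rcases le_total 0 t with h | h
    · exact hpos t h hr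
    · rw [← heven t]; exact hpos (-t) (by linarith) (by linarith)
  have hphi2 : 0 < phiK σ 2 := by
    simp only [phiK]
    norm_num
    linarith
  refine ⟨hphi2, ⌈3 / (b - a)⌉₊, fun n hn x hx => ?_⟩
  have hba : (0:ℝ) < b - a := by linarith
  have hn3 : 3 ≤ (n : ℝ) * (b - a) := by
    have h1 : 3 / (b - a) ≤ (⌈3 / (b - a)⌉₊ : ℝ) := Nat.le_ceil _
    have h2 : ((⌈3 / (b - a)⌉₊ : ℕ) : ℝ) ≤ (n : ℝ) := by exact_mod_cast hn
    have : 3 / (b - a) ≤ (n : ℝ) := le_trans h1 h2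
    calc (3:ℝ) = 3 / (b - a) * (b - a) := by field_simp
    _ ≤ (n:ℝ) * (b - a) := by apply mul_le_mul_of_nonneg_right this (le_of_lt hba)
  obtain ⟨hax, hxb⟩ := hx
  have hnn : (0:ℝ) ≤ (n:ℝ) := Nat.cast_nonneg n
  have hnax : (n:ℝ) * a ≤ (n:ℝ) * x := mul_le_mul_of_nonneg_left hax hnn
  have hnxb : (n:ℝ) * x ≤ (n:ℝ) * b := mul_le_mul_of_nonneg_left hxb hnn
  have hceil : (⌈(n:ℝ) * a⌉ : ℝ) < (n:ℝ) * a + 1 := Int.ceil_lt_add_one _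
  have hceil2 : ((n:ℝ) * a) ≤ ⌈(n:ℝ) * a⌉ := Int.le_ceil _
  have hfloorb : ((n:ℝ) * b) - 1 < (⌊(n:ℝ) * b⌋ : ℝ) := Int.sub_one_lt_floor _
  have hfloorb2 : ((⌊(n:ℝ) * b⌋ : ℤ) : ℝ) ≤ (n:ℝ) * b := Int.floor_le _
  have hfloorx : ((⌊(n:ℝ) * x⌋ : ℤ) : ℝ) ≤ (n:ℝ) * x := Int.floor_le _
  have hfloorx2 : (n:ℝ) * x < (⌊(n:ℝ) * x⌋ : ℝ) + 1 := Int.lt_floor_add_one _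
  -- nonemptiness: ⌈na⌉ ≤ ⌊nb⌋ - 1
  have hne : ⌈(n:ℝ) * a⌉ ≤ ⌊(n:ℝ) * b⌋ - 1 := by
    have : (⌈(n:ℝ) * a⌉ : ℝ) + 1 < (⌊(n:ℝ) * b⌋ : ℝ) := by
      have hnb : (n:ℝ) * a + 3 ≤ (n:ℝ) * b := by nlinarith
      linarith
    have : ⌈(n:ℝ) * a⌉ + 1 < ⌊(n:ℝ) * b⌋ := by exact_mod_cast this
    omega
  set k : ℤ := max ⌈(n:ℝ) * a⌉ (min ⌊(n:ℝ) * x⌋ (⌊(n:ℝ) * b⌋ - 1)) with hk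
  have hk1 : ⌈(n:ℝ) * a⌉ ≤ k := le_max_left _ _
  have hk2 : k ≤ ⌊(n:ℝ) * b⌋ - 1 := by
    apply max_le hne (min_le_right _ _)
  have hkr : |(n:ℝ) * x - (k : ℝ)| ≤ 2 := by
    have hub : (k : ℝ) ≤ (n:ℝ) * x + 1 := by
      have h1 : k ≤ max ⌈(n:ℝ) * a⌉ ⌊(n:ℝ) * x⌋ :=
        max_le_max le_rfl (min_le_left _ _)
      have h2 : ((max ⌈(n:ℝ) * a⌉ ⌊(n:ℝ) * x⌋ : ℤ) : ℝ) ≤ (n:ℝ) * x + 1 := by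
        rcases max_cases ⌈(n:ℝ) * a⌉ ⌊(n:ℝ) * x⌋ with ⟨he, _⟩ | ⟨he, _⟩ <;> rw [he]
        · linarith
        · linarith
      have h1' : (k : ℝ) ≤ ((max ⌈(n:ℝ) * a⌉ ⌊(n:ℝ) * x⌋ : ℤ) : ℝ) := by exact_mod_cast h1
      linarith
    have hlb : (n:ℝ) * x - 2 ≤ (k : ℝ) := by
      have h1 : min ⌊(n:ℝ) * x⌋ (⌊(n:ℝ) * b⌋ - 1) ≤ k := le_max_right _ _
      have h1' : ((min ⌊(n:ℝ) * x⌋ (⌊(n:ℝ) * b⌋ - 1) : ℤ) : ℝ) ≤ (k : ℝ) := by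
        exact_mod_cast h1
      rcases min_cases ⌊(n:ℝ) * x⌋ (⌊(n:ℝ) * b⌋ - 1) with ⟨he, _⟩ | ⟨he, _⟩ <;>
        rw [he] at h1' <;> push_cast at h1'
      · linarith
      · linarith
    rw [abs_le]; constructor <;> linarith
  have hmem : phiK σ ((n:ℝ) * x - (k : ℝ)) ∈
      {z : ℝ | ∃ k : ℤ, ⌈(n : ℝ) * a⌉ ≤ k ∧ k ≤ ⌊(n : ℝ) * b⌋ - 1 ∧
        z = phiK σ ((n : ℝ) * x - (k : ℝ))} := ⟨k, hk1, hk2, rfl⟩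
  have hbdd : BddAbove {z : ℝ | ∃ k : ℤ, ⌈(n : ℝ) * a⌉ ≤ k ∧ k ≤ ⌊(n : ℝ) * b⌋ - 1 ∧
      z = phiK σ ((n : ℝ) * x - (k : ℝ))} := by
    refine ⟨1/2, fun z hz => ?_⟩
    obtain ⟨k', _, _, hz⟩ := hz
    rw [hz]
    simp only [phiK]
    have := hσ1 ((n:ℝ) * x - (k' : ℝ) + 1)
    have := hσ0 ((n:ℝ) * x - (k' : ℝ) - 1)
    linarith
  exact le_trans (hkey _ hkr) (le_csSup hbdd hmem)
end

section
/- Let σ: ℝ→ℝ be a nondecreasing sigmoidal function with σ(3)>σ(1) satisfying conditions (Σ1), (Σ2) and (Σ3) with parameter α>0. Then for every δ>0 there exist C>0 and N∈ℕ such that for all n ≥ N and all x∈ℝ, sup{ φ_σ(x-k) : k∈ℤ, |x-k| > nδ } ≤ C·n^{-(1+α)}. -/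
open Filter MeasureTheory Set

theorem stmt6 (σ : ℝ → ℝ) (α : ℝ)
    (hsig1 : Filter.Tendsto σ Filter.atBot (nhds 0))
    (hsig2 : Filter.Tendsto σ Filter.atTop (nhds 1))
    (hmono : Monotone σ) (h31 : σ 1 < σ 3)
    (hS1 : ∀ x : ℝ, σ (-x) - 1 / 2 = -(σ x - 1 / 2))
    (hS2 : ContDiff ℝ 2 σ ∧ ConcaveOn ℝ (Set.Ici (0 : ℝ)) σ)
    (hα : 0 < α)
    (hS3 : ∃ M > (0 : ℝ), ∃ L > (0 : ℝ), ∀ x : ℝ, x ≤ -L → σ x ≤ M * |x| ^ (-(1 + α))) :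
    ∀ δ > (0 : ℝ), ∃ C > (0 : ℝ), ∃ N : ℕ, ∀ n : ℕ, N ≤ n → ∀ x : ℝ,
      sSup {z : ℝ | ∃ k : ℤ, (n : ℝ) * δ < |x - (k : ℝ)| ∧ z = phiK σ (x - (k : ℝ))} ≤
        C * (n : ℝ) ^ (-(1 + α)) := by
  obtain ⟨M, hM, L, hL, hS3⟩ := hS3
  intro δ hδ
  have hσ0 : ∀ x, 0 ≤ σ x := fun x =>
    le_of_tendsto hsig1 (Filter.eventually_atBot.2 ⟨x, fun y hy => hmono hy⟩)
  have hneg : ∀ x : ℝ, σ (-x) = 1 - σ x := by intro x; have := hS1 x; linarith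
  have heven : ∀ y : ℝ, phiK σ (-y) = phiK σ y := by
    intro y
    simp only [phiK]
    have h1 : -y + 1 = -(y - 1) := by ring
    have h2 : -y - 1 = -(y + 1) := by ring
    rw [h1, h2, hneg, hneg]; ring
  set A : ℝ := max (L + 1) 2 with hAdef
  have hA2 : (2:ℝ) ≤ A := le_max_right _ _
  have hAL : L + 1 ≤ A := le_max_left _ _
  refine ⟨M * (δ / 2) ^ (-(1 + α)), by positivity, ⌈A / δ⌉₊ + 1, ?_⟩
  intro n hn x
  have hnpos : 0 < (n:ℝ) := by
    have : 1 ≤ n := le_trans (Nat.le_add_left 1 _) hn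
    exact_mod_cast this
  have hnδ : A ≤ n * δ := by
    have h1 : A / δ ≤ (⌈A / δ⌉₊ : ℝ) := Nat.le_ceil _
    have h2 : (⌈A / δ⌉₊ : ℝ) ≤ n := by exact_mod_cast le_trans (Nat.le_add_right _ 1) hn
    calc A = (A / δ) * δ := by field_simp
    _ ≤ n * δ := by nlinarith
  have key : ∀ y : ℝ, (n:ℝ) * δ < |y| →
      phiK σ y ≤ M * (δ/2) ^ (-(1+α)) * (n:ℝ) ^ (-(1+α)) := by
    intro y hy
    have h1 : phiK σ y = phiK σ (-|y|) := by
      rcases abs_cases y with ⟨h, _⟩ | ⟨h, _⟩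
      · rw [h, heven]
      · rw [h, neg_neg]
    rw [h1]
    set w : ℝ := -|y| with hw
    have hwlt : w < -((n:ℝ)*δ) := by simp only [hw]; linarith
    have hw1 : w + 1 ≤ -L := by nlinarith
    have hσb : σ (w+1) ≤ M * |w+1| ^ (-(1+α)) := hS3 _ hw1
    have habs : |w+1| = -(w+1) := abs_of_nonpos (by nlinarith)
    have hge : (δ/2) * (n:ℝ) ≤ -(w+1) := by nlinarith
    have hrpow : |w+1| ^ (-(1+α)) ≤ ((δ/2) * (n:ℝ)) ^ (-(1+α)) := by
      rw [habs]
      exact Real.rpow_le_rpow_of_nonpos (by positivity) hge (by linarith)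
    have hphi : phiK σ w ≤ σ (w+1) := by
      simp only [phiK]
      have h0 := hσ0 (w - 1)
      have h1 := hσ0 (w + 1)
      linarith
    have hsplit : ((δ/2) * (n:ℝ)) ^ (-(1+α)) = (δ/2)^(-(1+α)) * (n:ℝ) ^ (-(1+α)) :=
      Real.mul_rpow (by positivity) (by positivity)
    calc phiK σ w ≤ σ (w+1) := hphi
      _ ≤ M * |w+1| ^ (-(1+α)) := hσb
      _ ≤ M * ((δ/2) * (n:ℝ)) ^ (-(1+α)) := by
          exact mul_le_mul_of_nonneg_left hrpow hM.le
      _ = M * (δ/2) ^ (-(1+α)) * (n:ℝ) ^ (-(1+α)) := by rw [hsplit]; ring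
  apply Real.sSup_le
  · rintro z ⟨k, hk, rfl⟩
    exact key _ hk
  · positivity
end

section
/- Let σ: ℝ→ℝ be a nondecreasing sigmoidal function with σ(3)>σ(1) satisfying conditions (Σ1) and (Σ2). Let a<b, let f,g:[a,b]→[0,1] be measurable functions, and let n∈ℕ be such that ⌈na⌉ ≤ ⌊nb⌋-1. Then the operator is sublinear: K_n^(m)(f+g;x) ≤ K_n^(m)(f;x) + K_n^(m)(g;x) for all x∈[a,b], where K_n^(m)(f+g) is given by the same defining formula applied to the nonnegative bounded measurable function f+g. -/
open Filter MeasureTheory Set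

noncomputable def Kmm (σ : ℝ → ℝ) (a b : ℝ) (n : ℕ) (f : ℝ → ℝ) (x : ℝ) : ℝ :=
  sSup {y : ℝ | ∃ k : ℤ, ⌈(n : ℝ) * a⌉ ≤ k ∧ k ≤ ⌊(n : ℝ) * b⌋ - 1 ∧
    y = min ((n : ℝ) * ∫ u in ((k : ℝ) / (n : ℝ))..(((k : ℝ) + 1) / (n : ℝ)), f u)
      (phiK σ ((n : ℝ) * x - (k : ℝ)) /
        sSup {z : ℝ | ∃ d : ℤ, ⌈(n : ℝ) * a⌉ ≤ d ∧ d ≤ ⌊(n : ℝ) * b⌋ - 1 ∧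
          z = phiK σ ((n : ℝ) * x - (d : ℝ))})}

lemma min_add_min_aux {A B r : ℝ} (hA : 0 ≤ A) (hB : 0 ≤ B) (hr : 0 ≤ r) :
    min (A + B) r ≤ min A r + min B r := by
  rcases le_total r A with h | h
  · calc min (A + B) r ≤ r := min_le_right _ _
      _ = min A r := (min_eq_right h).symm
      _ ≤ min A r + min B r := le_add_of_nonneg_right (le_min hB hr)
  rcases le_total r B with h' | h'
  · calc min (A + B) r ≤ r := min_le_right _ _
      _ = min B r := (min_eq_right h').symm
      _ ≤ min A r + min B r := le_add_of_nonneg_left (le_min hA hr)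
  · rw [min_eq_left h, min_eq_left h']
    exact min_le_left _ _

lemma aux_int (F : ℝ → ℝ) (a b : ℝ) (hFm : Measurable F)
    (hF01 : ∀ x ∈ Set.Icc a b, F x ∈ Set.Icc (0 : ℝ) 1)
    (n : ℕ) (k : ℤ) (hk1 : ⌈(n : ℝ) * a⌉ ≤ k) (hk2 : k ≤ ⌊(n : ℝ) * b⌋ - 1) :
    IntervalIntegrable F MeasureTheory.volume ((k : ℝ) / (n : ℝ)) (((k : ℝ) + 1) / (n : ℝ)) ∧
    0 ≤ (n : ℝ) * ∫ u in ((k : ℝ) / (n : ℝ))..(((k : ℝ) + 1) / (n : ℝ)), F u ∧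
    (n : ℝ) * ∫ u in ((k : ℝ) / (n : ℝ))..(((k : ℝ) + 1) / (n : ℝ)), F u ≤ 1 := by
  rcases Nat.eq_zero_or_pos n with hn0 | hn0
  · subst hn0
    simp [intervalIntegral.integral_same]
  have hnpos : (0 : ℝ) < n := by exact_mod_cast hn0
  have hak : (n : ℝ) * a ≤ (k : ℝ) := le_trans (Int.le_ceil _) (by exact_mod_cast hk1)
  have hkb : (k : ℝ) + 1 ≤ (n : ℝ) * b := by
    have h1 : ((k : ℝ) + 1) ≤ ((⌊(n : ℝ) * b⌋ : ℤ) : ℝ) := by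
      exact_mod_cast (by omega : k + 1 ≤ ⌊(n : ℝ) * b⌋)
    exact h1.trans (Int.floor_le _)
  have ha : a ≤ (k : ℝ) / n := by rw [le_div_iff₀ hnpos]; nlinarith
  have hb : ((k : ℝ) + 1) / n ≤ b := by rw [div_le_iff₀ hnpos]; nlinarith
  have hle : (k : ℝ) / n ≤ ((k : ℝ) + 1) / n := by
    apply div_le_div_of_nonneg_right (by linarith) hnpos.le
  have hsub : Set.Icc ((k : ℝ) / n) (((k : ℝ) + 1) / n) ⊆ Set.Icc a b :=
    Set.Icc_subset_Icc ha hb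
  have hint : IntervalIntegrable F MeasureTheory.volume ((k : ℝ) / n) (((k : ℝ) + 1) / n) := by
    rw [intervalIntegrable_iff_integrableOn_Ioc_of_le hle]
    apply MeasureTheory.Measure.integrableOn_of_bounded (M := 1) measure_Ioc_lt_top.ne
      hFm.aestronglyMeasurable
    filter_upwards [MeasureTheory.ae_restrict_mem measurableSet_Ioc] with u hu
    have h2 := hF01 u (hsub (Set.Ioc_subset_Icc_self hu))
    rw [Real.norm_eq_abs, abs_le]
    exact ⟨by linarith [h2.1], h2.2⟩
  refine ⟨hint, ?_, ?_⟩
  · exact mul_nonneg hnpos.le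
      (intervalIntegral.integral_nonneg hle fun u hu => (hF01 u (hsub hu)).1)
  · have hm : (∫ u in ((k : ℝ) / n)..(((k : ℝ) + 1) / n), F u) ≤
        ∫ _ in ((k : ℝ) / n)..(((k : ℝ) + 1) / n), (1 : ℝ) :=
      intervalIntegral.integral_mono_on hle hint intervalIntegrable_const
        (fun u hu => (hF01 u (hsub hu)).2)
    have hc : (∫ _ in ((k : ℝ) / n)..(((k : ℝ) + 1) / n), (1 : ℝ)) = 1 / n := by
      rw [intervalIntegral.integral_const, smul_eq_mul, mul_one]
      field_simp
      ring
    rw [hc] at hm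
    calc (n : ℝ) * ∫ u in ((k : ℝ) / n)..(((k : ℝ) + 1) / n), F u
        ≤ (n : ℝ) * (1 / n) := by nlinarith
      _ = 1 := by field_simp

theorem stmt10 (σ : ℝ → ℝ) (a b : ℝ) (hab : a < b) (f g : ℝ → ℝ)
    (hsig1 : Filter.Tendsto σ Filter.atBot (nhds 0))
    (hsig2 : Filter.Tendsto σ Filter.atTop (nhds 1))
    (hmono : Monotone σ) (h31 : σ 1 < σ 3)
    (hS1 : ∀ x : ℝ, σ (-x) - 1 / 2 = -(σ x - 1 / 2))
    (hS2 : ContDiff ℝ 2 σ ∧ ConcaveOn ℝ (Set.Ici (0 : ℝ)) σ)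
    (hfm : Measurable f) (hf01 : ∀ x ∈ Set.Icc a b, f x ∈ Set.Icc (0 : ℝ) 1)
    (hgm : Measurable g) (hg01 : ∀ x ∈ Set.Icc a b, g x ∈ Set.Icc (0 : ℝ) 1)
    (n : ℕ) (hn : ⌈(n : ℝ) * a⌉ ≤ ⌊(n : ℝ) * b⌋ - 1) :
    ∀ x ∈ Set.Icc a b,
      Kmm σ a b n (fun u => f u + g u) x ≤ Kmm σ a b n f x + Kmm σ a b n g x := by
  intro x hx
  have hφ0 : ∀ y : ℝ, 0 ≤ phiK σ y := by
    intro y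
    have := hmono (show y - 1 ≤ y + 1 by linarith)
    unfold phiK; linarith
  set M := sSup {z : ℝ | ∃ d : ℤ, ⌈(n : ℝ) * a⌉ ≤ d ∧ d ≤ ⌊(n : ℝ) * b⌋ - 1 ∧
      z = phiK σ ((n : ℝ) * x - (d : ℝ))} with hM
  have hMnn : 0 ≤ M := Real.sSup_nonneg (by rintro z ⟨d, _, _, rfl⟩; exact hφ0 _)
  have hr : ∀ k : ℤ, 0 ≤ phiK σ ((n : ℝ) * x - (k : ℝ)) / M :=
    fun k => div_nonneg (hφ0 _) hMnn
  -- bounded above of the f and g sets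
  have bddF : ∀ (F : ℝ → ℝ), Measurable F → (∀ x ∈ Set.Icc a b, F x ∈ Set.Icc (0 : ℝ) 1) →
      BddAbove {y : ℝ | ∃ k : ℤ, ⌈(n : ℝ) * a⌉ ≤ k ∧ k ≤ ⌊(n : ℝ) * b⌋ - 1 ∧
        y = min ((n : ℝ) * ∫ u in ((k : ℝ) / (n : ℝ))..(((k : ℝ) + 1) / (n : ℝ)), F u)
          (phiK σ ((n : ℝ) * x - (k : ℝ)) / M)} := by
    intro F hFm hF01
    refine ⟨1, ?_⟩
    rintro y ⟨k, hk1, hk2, rfl⟩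
    exact (min_le_left _ _).trans (aux_int F a b hFm hF01 n k hk1 hk2).2.2
  unfold Kmm
  rw [← hM]
  apply Real.sSup_le
  · rintro y ⟨k, hk1, hk2, rfl⟩
    obtain ⟨hintf, hf0, hf1⟩ := aux_int f a b hfm hf01 n k hk1 hk2
    obtain ⟨hintg, hg0, hg1⟩ := aux_int g a b hgm hg01 n k hk1 hk2
    have hadd : (∫ u in ((k : ℝ) / (n : ℝ))..(((k : ℝ) + 1) / (n : ℝ)), (f u + g u))
        = (∫ u in ((k : ℝ) / (n : ℝ))..(((k : ℝ) + 1) / (n : ℝ)), f u)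
          + ∫ u in ((k : ℝ) / (n : ℝ))..(((k : ℝ) + 1) / (n : ℝ)), g u :=
      intervalIntegral.integral_add hintf hintg
    have key : min ((n : ℝ) * ∫ u in ((k : ℝ) / (n : ℝ))..(((k : ℝ) + 1) / (n : ℝ)), (f u + g u))
        (phiK σ ((n : ℝ) * x - (k : ℝ)) / M)
        ≤ min ((n : ℝ) * ∫ u in ((k : ℝ) / (n : ℝ))..(((k : ℝ) + 1) / (n : ℝ)), f u)
            (phiK σ ((n : ℝ) * x - (k : ℝ)) / M)
          + min ((n : ℝ) * ∫ u in ((k : ℝ) / (n : ℝ))..(((k : ℝ) + 1) / (n : ℝ)), g u)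
            (phiK σ ((n : ℝ) * x - (k : ℝ)) / M) := by
      rw [hadd, mul_add]
      exact min_add_min_aux hf0 hg0 (hr k)
    refine key.trans (add_le_add ?_ ?_)
    · exact le_csSup (bddF f hfm hf01) ⟨k, hk1, hk2, rfl⟩
    · exact le_csSup (bddF g hgm hg01) ⟨k, hk1, hk2, rfl⟩
  · refine add_nonneg (Real.sSup_nonneg ?_) (Real.sSup_nonneg ?_)
    · rintro y ⟨k, hk1, hk2, rfl⟩
      exact le_min (aux_int f a b hfm hf01 n k hk1 hk2).2.1 (hr k)
    · rintro y ⟨k, hk1, hk2, rfl⟩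
      exact le_min (aux_int g a b hgm hg01 n k hk1 hk2).2.1 (hr k)
end

section
/- Let σ: ℝ→ℝ be a nondecreasing sigmoidal function with σ(3)>σ(1) satisfying conditions (Σ1) and (Σ2). Let a<b, let f,g:[a,b]→[0,1] be measurable functions, and let n∈ℕ be such that ⌈na⌉ ≤ ⌊nb⌋-1. Then |K_n^(m)(f;x) - K_n^(m)(g;x)| ≤ K_n^(m)(|f-g|;x) for all x∈[a,b]. -/
open Filter MeasureTheory Set

-- min splitting lemma
lemma min_add_split {X Y W Bk : ℝ} (hX : 0 ≤ X) (hY : 0 ≤ Y) (hB : 0 ≤ Bk)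
    (hW : W ≤ X + Y) : min W Bk ≤ min X Bk + min Y Bk := by
  rcases le_total Bk X with h | h
  · rw [min_eq_right h]
    have h1 : min W Bk ≤ Bk := min_le_right _ _
    have h2 : 0 ≤ min Y Bk := le_min hY hB
    linarith
  · rcases le_total Bk Y with h2 | h2
    · rw [min_eq_right h2]
      have h1 : min W Bk ≤ Bk := min_le_right _ _
      have h3 : 0 ≤ min X Bk := le_min hX hB
      linarith
    · rw [min_eq_left h, min_eq_left h2]
      have h1 : min W Bk ≤ W := min_le_left _ _
      linarith

lemma key (lo hi : ℤ) (hle : lo ≤ hi) (A C D B : ℤ → ℝ)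
    (hA : ∀ k, lo ≤ k → k ≤ hi → 0 ≤ A k)
    (hC : ∀ k, lo ≤ k → k ≤ hi → 0 ≤ C k)
    (hD : ∀ k, lo ≤ k → k ≤ hi → 0 ≤ D k)
    (hB : ∀ k, 0 ≤ B k)
    (hAC : ∀ k, lo ≤ k → k ≤ hi → A k ≤ C k + D k)
    (hCA : ∀ k, lo ≤ k → k ≤ hi → C k ≤ A k + D k) :
    |sSup {y : ℝ | ∃ k : ℤ, lo ≤ k ∧ k ≤ hi ∧ y = min (A k) (B k)} -
      sSup {y : ℝ | ∃ k : ℤ, lo ≤ k ∧ k ≤ hi ∧ y = min (C k) (B k)}| ≤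
      sSup {y : ℝ | ∃ k : ℤ, lo ≤ k ∧ k ≤ hi ∧ y = min (D k) (B k)} := by
  have himg : ∀ F : ℤ → ℝ, {y : ℝ | ∃ k : ℤ, lo ≤ k ∧ k ≤ hi ∧ y = F k}
      = F '' (Set.Icc lo hi) := by
    intro F
    ext y
    constructor
    · rintro ⟨k, h1, h2, rfl⟩; exact ⟨k, ⟨h1, h2⟩, rfl⟩
    · rintro ⟨k, ⟨h1, h2⟩, rfl⟩; exact ⟨k, h1, h2, rfl⟩
  have hbdd : ∀ F : ℤ → ℝ, BddAbove {y : ℝ | ∃ k : ℤ, lo ≤ k ∧ k ≤ hi ∧ y = F k} := by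
    intro F
    rw [himg]
    exact ((Set.finite_Icc lo hi).image F).bddAbove
  set SA := {y : ℝ | ∃ k : ℤ, lo ≤ k ∧ k ≤ hi ∧ y = min (A k) (B k)} with hSA
  set SC := {y : ℝ | ∃ k : ℤ, lo ≤ k ∧ k ≤ hi ∧ y = min (C k) (B k)} with hSC
  set SD := {y : ℝ | ∃ k : ℤ, lo ≤ k ∧ k ≤ hi ∧ y = min (D k) (B k)} with hSD
  have memA : min (A lo) (B lo) ∈ SA := ⟨lo, le_refl _, hle, rfl⟩
  have memC : min (C lo) (B lo) ∈ SC := ⟨lo, le_refl _, hle, rfl⟩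
  have memD : min (D lo) (B lo) ∈ SD := ⟨lo, le_refl _, hle, rfl⟩
  have hA0 : 0 ≤ sSup SA :=
    le_trans (le_min (hA lo le_rfl hle) (hB lo)) (le_csSup (hbdd _) memA)
  have hC0 : 0 ≤ sSup SC :=
    le_trans (le_min (hC lo le_rfl hle) (hB lo)) (le_csSup (hbdd _) memC)
  have hD0 : 0 ≤ sSup SD :=
    le_trans (le_min (hD lo le_rfl hle) (hB lo)) (le_csSup (hbdd _) memD)
  have h1 : sSup SA ≤ sSup SC + sSup SD := by
    apply Real.sSup_le _ (by linarith)
    rintro y ⟨k, hk1, hk2, rfl⟩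
    calc min (A k) (B k) ≤ min (C k) (B k) + min (D k) (B k) :=
          min_add_split (hC k hk1 hk2) (hD k hk1 hk2) (hB k) (hAC k hk1 hk2)
      _ ≤ sSup SC + sSup SD :=
          add_le_add (le_csSup (hbdd _) ⟨k, hk1, hk2, rfl⟩)
            (le_csSup (hbdd _) ⟨k, hk1, hk2, rfl⟩)
  have h2 : sSup SC ≤ sSup SA + sSup SD := by
    apply Real.sSup_le _ (by linarith)
    rintro y ⟨k, hk1, hk2, rfl⟩
    calc min (C k) (B k) ≤ min (A k) (B k) + min (D k) (B k) :=
          min_add_split (hA k hk1 hk2) (hD k hk1 hk2) (hB k) (hCA k hk1 hk2)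
      _ ≤ sSup SA + sSup SD :=
          add_le_add (le_csSup (hbdd _) ⟨k, hk1, hk2, rfl⟩)
            (le_csSup (hbdd _) ⟨k, hk1, hk2, rfl⟩)
  rw [abs_sub_le_iff]
  constructor <;> linarith

lemma intInt (h : ℝ → ℝ) (hm : Measurable h) (c d : ℝ)
    (hb : ∀ u ∈ Set.uIoc c d, |h u| ≤ 1) : IntervalIntegrable h volume c d := by
  rw [intervalIntegrable_iff]
  have hconst : IntegrableOn (fun _ : ℝ => (1 : ℝ)) (Set.uIoc c d) volume :=
    (integrableOn_const_iff).mpr (Or.inr (by rw [Set.uIoc]; exact measure_Ioc_lt_top))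
  apply hconst.mono' hm.aestronglyMeasurable.restrict
  filter_upwards [ae_restrict_mem measurableSet_uIoc] with u hu
  simpa [Real.norm_eq_abs] using hb u hu

theorem stmt11 (σ : ℝ → ℝ) (a b : ℝ) (hab : a < b) (f g : ℝ → ℝ)
    (hsig1 : Filter.Tendsto σ Filter.atBot (nhds 0))
    (hsig2 : Filter.Tendsto σ Filter.atTop (nhds 1))
    (hmono : Monotone σ) (h31 : σ 1 < σ 3)
    (hS1 : ∀ x : ℝ, σ (-x) - 1 / 2 = -(σ x - 1 / 2))
    (hS2 : ContDiff ℝ 2 σ ∧ ConcaveOn ℝ (Set.Ici (0 : ℝ)) σ)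
    (hfm : Measurable f) (hf01 : ∀ x ∈ Set.Icc a b, f x ∈ Set.Icc (0 : ℝ) 1)
    (hgm : Measurable g) (hg01 : ∀ x ∈ Set.Icc a b, g x ∈ Set.Icc (0 : ℝ) 1)
    (n : ℕ) (hn : ⌈(n : ℝ) * a⌉ ≤ ⌊(n : ℝ) * b⌋ - 1) :
    ∀ x ∈ Set.Icc a b,
      |Kmm σ a b n f x - Kmm σ a b n g x| ≤ Kmm σ a b n (fun u => |f u - g u|) x := by
  intro x hx
  have hn0 : 0 < (n : ℝ) := by
    rcases Nat.eq_zero_or_pos n with h0 | h0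
    · exfalso
      subst h0
      simp at hn
    · exact_mod_cast h0
  -- interval facts
  have hsub : ∀ k : ℤ, ⌈(n : ℝ) * a⌉ ≤ k → k ≤ ⌊(n : ℝ) * b⌋ - 1 →
      Set.Icc ((k : ℝ) / (n : ℝ)) (((k : ℝ) + 1) / (n : ℝ)) ⊆ Set.Icc a b := by
    intro k h1 h2
    apply Set.Icc_subset_Icc
    · rw [le_div_iff₀ hn0]
      calc a * (n : ℝ) = (n : ℝ) * a := mul_comm _ _
        _ ≤ (k : ℝ) := by exact_mod_cast Int.ceil_le.mp h1
    · rw [div_le_iff₀ hn0]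
      have : (k : ℝ) + 1 ≤ (n : ℝ) * b := by
        have : (k + 1 : ℤ) ≤ ⌊(n : ℝ) * b⌋ := by omega
        exact_mod_cast le_trans (by exact_mod_cast this) (Int.floor_le _)
      linarith [mul_comm b (n : ℝ)]
  have hstep : ∀ k : ℤ, (k : ℝ) / (n : ℝ) ≤ ((k : ℝ) + 1) / (n : ℝ) := by
    intro k
    gcongr
    linarith
  -- integrability
  have hint : ∀ (h : ℝ → ℝ), Measurable h → (∀ u ∈ Set.Icc a b, |h u| ≤ 1) →
      ∀ k : ℤ, ⌈(n : ℝ) * a⌉ ≤ k → k ≤ ⌊(n : ℝ) * b⌋ - 1 →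
      IntervalIntegrable h volume ((k : ℝ) / (n : ℝ)) (((k : ℝ) + 1) / (n : ℝ)) := by
    intro h hm hb k h1 h2
    apply intInt h hm
    intro u hu
    apply hb
    apply hsub k h1 h2
    have := Set.uIoc_of_le (hstep k)
    rw [this] at hu
    exact Set.Ioc_subset_Icc_self hu
  have hfb : ∀ u ∈ Set.Icc a b, |f u| ≤ 1 := by
    intro u hu
    have := hf01 u hu
    rw [abs_le]
    constructor <;> [linarith [this.1]; exact this.2]
  have hgb : ∀ u ∈ Set.Icc a b, |g u| ≤ 1 := by
    intro u hu
    have := hg01 u hu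
    rw [abs_le]
    constructor <;> [linarith [this.1]; exact this.2]
  have hdb : ∀ u ∈ Set.Icc a b, |(fun u => |f u - g u|) u| ≤ 1 := by
    intro u hu
    have h1 := hf01 u hu
    have h2 := hg01 u hu
    simp only [abs_abs]
    rw [abs_le]
    constructor <;> [linarith [h1.1, h2.2]; linarith [h1.2, h2.1]]
  have hdm : Measurable (fun u => |f u - g u|) := (hfm.sub hgm).abs
  -- nonnegativity of integral terms
  have hIpos : ∀ (h : ℝ → ℝ), (∀ u ∈ Set.Icc a b, 0 ≤ h u) →
      ∀ k : ℤ, ⌈(n : ℝ) * a⌉ ≤ k → k ≤ ⌊(n : ℝ) * b⌋ - 1 →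
      0 ≤ (n : ℝ) * ∫ u in ((k : ℝ) / (n : ℝ))..(((k : ℝ) + 1) / (n : ℝ)), h u := by
    intro h hh k h1 h2
    apply mul_nonneg hn0.le
    apply intervalIntegral.integral_nonneg (hstep k)
    intro u hu
    exact hh u (hsub k h1 h2 hu)
  -- main integral comparison
  have hcomp : ∀ (p q : ℝ → ℝ), Measurable p → Measurable q →
      (∀ u ∈ Set.Icc a b, p u ∈ Set.Icc (0 : ℝ) 1) →
      (∀ u ∈ Set.Icc a b, q u ∈ Set.Icc (0 : ℝ) 1) →
      ∀ k : ℤ, ⌈(n : ℝ) * a⌉ ≤ k → k ≤ ⌊(n : ℝ) * b⌋ - 1 →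
      (n : ℝ) * ∫ u in ((k : ℝ) / (n : ℝ))..(((k : ℝ) + 1) / (n : ℝ)), p u ≤
      ((n : ℝ) * ∫ u in ((k : ℝ) / (n : ℝ))..(((k : ℝ) + 1) / (n : ℝ)), q u) +
      (n : ℝ) * ∫ u in ((k : ℝ) / (n : ℝ))..(((k : ℝ) + 1) / (n : ℝ)), |p u - q u| := by
    intro p q hpm hqm hpb hqb k h1 h2
    have hpb' : ∀ u ∈ Set.Icc a b, |p u| ≤ 1 := fun u hu => by
      have := hpb u hu; rw [abs_le]; exact ⟨by linarith [this.1], this.2⟩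
    have hqb' : ∀ u ∈ Set.Icc a b, |q u| ≤ 1 := fun u hu => by
      have := hqb u hu; rw [abs_le]; exact ⟨by linarith [this.1], this.2⟩
    have hip := hint p hpm hpb' k h1 h2
    have hiq := hint q hqm hqb' k h1 h2
    have hid : IntervalIntegrable (fun u => |p u - q u|) volume
        ((k : ℝ) / (n : ℝ)) (((k : ℝ) + 1) / (n : ℝ)) := by
      apply intInt _ ((hpm.sub hqm).abs)
      intro u hu
      have hu' : u ∈ Set.Icc a b := by
        apply hsub k h1 h2
        rw [Set.uIoc_of_le (hstep k)] at hu
        exact Set.Ioc_subset_Icc_self hu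
      have hp' := hpb u hu'
      have hq' := hqb u hu'
      rw [abs_abs, abs_le]
      constructor <;> simp only [Pi.sub_apply] <;> linarith [hp'.1, hp'.2, hq'.1, hq'.2]
    have key2 : (∫ u in ((k : ℝ) / (n : ℝ))..(((k : ℝ) + 1) / (n : ℝ)), p u) ≤
        (∫ u in ((k : ℝ) / (n : ℝ))..(((k : ℝ) + 1) / (n : ℝ)), q u) +
        ∫ u in ((k : ℝ) / (n : ℝ))..(((k : ℝ) + 1) / (n : ℝ)), |p u - q u| := by
      rw [← intervalIntegral.integral_add hiq hid]
      apply intervalIntegral.integral_mono_on (hstep k) hip (hiq.add hid)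
      intro u _
      show p u ≤ q u + |p u - q u|
      linarith [le_abs_self (p u - q u)]
    nlinarith
  -- apply the key lemma
  show |sSup _ - sSup _| ≤ sSup _
  apply key ⌈(n : ℝ) * a⌉ (⌊(n : ℝ) * b⌋ - 1) hn
    (fun k : ℤ => (n : ℝ) * ∫ u in ((k : ℝ) / (n : ℝ))..(((k : ℝ) + 1) / (n : ℝ)), f u)
    (fun k : ℤ => (n : ℝ) * ∫ u in ((k : ℝ) / (n : ℝ))..(((k : ℝ) + 1) / (n : ℝ)), g u)
    (fun k : ℤ => (n : ℝ) * ∫ u in ((k : ℝ) / (n : ℝ))..(((k : ℝ) + 1) / (n : ℝ)), |f u - g u|)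
    (fun k : ℤ => phiK σ ((n : ℝ) * x - (k : ℝ)) /
        sSup {z : ℝ | ∃ d : ℤ, ⌈(n : ℝ) * a⌉ ≤ d ∧ d ≤ ⌊(n : ℝ) * b⌋ - 1 ∧
          z = phiK σ ((n : ℝ) * x - (d : ℝ))})
  · intro k h1 h2
    exact hIpos f (fun u hu => (hf01 u hu).1) k h1 h2
  · intro k h1 h2
    exact hIpos g (fun u hu => (hg01 u hu).1) k h1 h2
  · intro k h1 h2
    exact hIpos _ (fun u _ => abs_nonneg _) k h1 h2
  · intro k
    apply div_nonneg
    · unfold phiK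
      have := hmono (show ((n : ℝ) * x - k) - 1 ≤ ((n : ℝ) * x - k) + 1 by linarith)
      linarith
    · apply Real.sSup_nonneg
      rintro z ⟨d, _, _, rfl⟩
      unfold phiK
      have := hmono (show ((n : ℝ) * x - d) - 1 ≤ ((n : ℝ) * x - d) + 1 by linarith)
      linarith
  · intro k h1 h2
    exact hcomp f g hfm hgm hf01 hg01 k h1 h2
  · intro k h1 h2
    have := hcomp g f hgm hfm hg01 hf01 k h1 h2
    have heq : (∫ u in ((k : ℝ) / (n : ℝ))..(((k : ℝ) + 1) / (n : ℝ)), |g u - f u|) =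
        ∫ u in ((k : ℝ) / (n : ℝ))..(((k : ℝ) + 1) / (n : ℝ)), |f u - g u| := by
      apply intervalIntegral.integral_congr
      intro u _
      exact abs_sub_comm _ _
    rw [heq] at this
    exact this
end

section
/- Let σ: ℝ→ℝ be a nondecreasing sigmoidal function with σ(3)>σ(1) satisfying conditions (Σ1), (Σ2) and (Σ3) with parameter α>0, and let a<b. Let f:[a,b]→[0,1] be a measurable function. Then: (i) if f is continuous at a point x∈[a,b], then lim_{n→∞} K_n^(m)(f;x) = f(x); (ii) if f is continuous on all of [a,b], then lim_{n→∞} sup_{x∈[a,b]} |K_n^(m)(f;x) - f(x)| = 0. -/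
open Filter MeasureTheory Set

lemma sSup_int_set (g : ℤ → ℝ) (p q : ℤ) (h : p ≤ q) :
    sSup {z : ℝ | ∃ d : ℤ, p ≤ d ∧ d ≤ q ∧ z = g d}
      = (Finset.Icc p q).sup' (Finset.nonempty_Icc.2 h) g := by
  rw [Finset.sup'_eq_csSup_image]
  congr 1
  ext z
  simp only [Set.mem_setOf_eq, Set.mem_image, Finset.coe_Icc, Set.mem_Icc]
  constructor
  · rintro ⟨d, h1, h2, rfl⟩; exact ⟨d, ⟨h1, h2⟩, rfl⟩
  · rintro ⟨d, ⟨h1, h2⟩, rfl⟩; exact ⟨d, h1, h2, rfl⟩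

lemma Kmm_eq (σ : ℝ → ℝ) (a b : ℝ) (n : ℕ) (f : ℝ → ℝ) (x : ℝ)
    (h : ⌈(n : ℝ) * a⌉ ≤ ⌊(n : ℝ) * b⌋ - 1) :
    Kmm σ a b n f x = (Finset.Icc ⌈(n : ℝ) * a⌉ (⌊(n : ℝ) * b⌋ - 1)).sup'
      (Finset.nonempty_Icc.2 h)
      (fun k => min ((n : ℝ) * ∫ u in ((k : ℝ) / (n : ℝ))..(((k : ℝ) + 1) / (n : ℝ)), f u)
        (phiK σ ((n : ℝ) * x - (k : ℝ)) /
          (Finset.Icc ⌈(n : ℝ) * a⌉ (⌊(n : ℝ) * b⌋ - 1)).sup' (Finset.nonempty_Icc.2 h)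
            (fun d => phiK σ ((n : ℝ) * x - (d : ℝ))))) := by
  unfold Kmm
  simp only [sSup_int_set _ _ _ h]

lemma integral_bounds (f : ℝ → ℝ) (hfm : Measurable f) {a b lo hi m M : ℝ}
    (hsub : Icc lo hi ⊆ Icc a b) (hlohi : lo ≤ hi)
    (hf01 : ∀ x ∈ Icc a b, f x ∈ Icc (0 : ℝ) 1)
    (hm : ∀ u ∈ Icc lo hi, m ≤ f u) (hM : ∀ u ∈ Icc lo hi, f u ≤ M) :
    m * (hi - lo) ≤ (∫ u in lo..hi, f u) ∧ (∫ u in lo..hi, f u) ≤ M * (hi - lo) := by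
  have hint : IntervalIntegrable f volume lo hi := by
    rw [intervalIntegrable_iff, uIoc_of_le hlohi]
    apply Measure.integrableOn_of_bounded (M := 1) measure_Ioc_lt_top.ne
      hfm.aestronglyMeasurable
    rw [ae_restrict_iff' measurableSet_Ioc]
    filter_upwards with u hu
    have h2 := hf01 u (hsub (Ioc_subset_Icc_self hu))
    rw [Real.norm_eq_abs, abs_le]
    exact ⟨by linarith [h2.1], h2.2⟩
  constructor
  · have := intervalIntegral.integral_mono_on hlohi (intervalIntegrable_const (c := m)) hint hm
    rwa [intervalIntegral.integral_const, smul_eq_mul, mul_comm] at this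
  · have := intervalIntegral.integral_mono_on hlohi hint (intervalIntegrable_const (c := M)) hM
    rwa [intervalIntegral.integral_const, smul_eq_mul, mul_comm] at this

set_option maxHeartbeats 2000000 in
lemma keylem (σ : ℝ → ℝ) (a b : ℝ) (hab : a < b) (f : ℝ → ℝ) (c : ℝ) (hc : 0 < c)
    (hφnn : ∀ t : ℝ, 0 ≤ phiK σ t)
    (hφc : ∀ t : ℝ, |t| ≤ 2 → c ≤ phiK σ t)
    (htail : ∀ ε : ℝ, 0 < ε → ∃ T : ℝ, 1 ≤ T ∧ ∀ t : ℝ, T ≤ |t| → phiK σ t ≤ ε)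
    (hfm : Measurable f) (hf01 : ∀ x ∈ Set.Icc a b, f x ∈ Set.Icc (0 : ℝ) 1) :
    ∀ ε : ℝ, 0 < ε → ∀ δ : ℝ, 0 < δ → ∃ N : ℕ, ∀ n ≥ N, ∀ x ∈ Set.Icc a b,
      (∀ u ∈ Set.Icc a b, |u - x| ≤ δ → |f u - f x| ≤ ε) →
      |Kmm σ a b n f x - f x| ≤ ε := by
  intro ε hε δ hδ
  obtain ⟨T0, hT0one, hT0⟩ := htail (c/2) (by positivity)
  obtain ⟨T1, hT1one, hT1⟩ := htail (c*ε) (by positivity)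
  set T := max T0 T1 with hTdef
  obtain ⟨N, hNR⟩ := exists_nat_ge (max (2/(b-a)) ((T+1)/δ))
  refine ⟨N, fun n hn x hx hmod => ?_⟩
  have hba : 0 < b - a := by linarith
  have hnR : (max (2/(b-a)) ((T+1)/δ)) ≤ (n:ℝ) := le_trans hNR (Nat.cast_le.2 hn)
  have hn2 : 2 ≤ (n:ℝ)*(b-a) := by
    have h1 : 2/(b-a) ≤ (n:ℝ) := le_trans (le_max_left _ _) hnR
    rw [div_le_iff₀ hba] at h1; linarith
  have hTpos : 1 ≤ T := le_trans hT0one (le_max_left _ _)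
  have hnδ : T + 1 ≤ (n:ℝ)*δ := by
    have h1 : (T+1)/δ ≤ (n:ℝ) := le_trans (le_max_right _ _) hnR
    rw [div_le_iff₀ hδ] at h1; linarith
  have hnpos : (0:ℝ) < n := by nlinarith
  have hceil : ⌈(n:ℝ)*a⌉ ≤ ⌊(n:ℝ)*b⌋ - 1 := by
    have h1 : ((⌈(n:ℝ)*a⌉ : ℤ):ℝ) < (n:ℝ)*a + 1 := Int.ceil_lt_add_one _
    have h2 : (n:ℝ)*b - 1 < ((⌊(n:ℝ)*b⌋ : ℤ):ℝ) := Int.sub_one_lt_floor _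
    have h3 : ⌈(n:ℝ)*a⌉ < ⌊(n:ℝ)*b⌋ := by exact_mod_cast show ((⌈(n:ℝ)*a⌉:ℤ):ℝ) < ((⌊(n:ℝ)*b⌋:ℤ):ℝ) by nlinarith
    omega
  rw [Kmm_eq σ a b n f x hceil]
  set p : ℤ := ⌈(n:ℝ)*a⌉ with hpdef
  set q : ℤ := ⌊(n:ℝ)*b⌋ - 1 with hqdef
  set S : Finset ℤ := Finset.Icc p q with hSdef
  have hS : S.Nonempty := Finset.nonempty_Icc.2 hceil
  set D : ℝ := S.sup' (Finset.nonempty_Icc.2 hceil) (fun d => phiK σ ((n:ℝ)*x - (d:ℝ))) with hDdef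
  -- clamped index k0
  set k0 : ℤ := max p (min ⌊(n:ℝ)*x⌋ q) with hk0def
  have hk0mem : k0 ∈ S := Finset.mem_Icc.2 ⟨le_max_left _ _, max_le hceil (min_le_right _ _)⟩
  have hxa : (n:ℝ)*a ≤ (n:ℝ)*x := mul_le_mul_of_nonneg_left hx.1 hnpos.le
  have hxb : (n:ℝ)*x ≤ (n:ℝ)*b := mul_le_mul_of_nonneg_left hx.2 hnpos.le
  have hk0near : |(n:ℝ)*x - (k0:ℝ)| ≤ 2 := by
    have hm1 : ((⌊(n:ℝ)*x⌋:ℤ):ℝ) ≤ (n:ℝ)*x := Int.floor_le _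
    have hm2 : (n:ℝ)*x - 1 < ((⌊(n:ℝ)*x⌋:ℤ):ℝ) := Int.sub_one_lt_floor _
    have hmq : ⌊(n:ℝ)*x⌋ ≤ ⌊(n:ℝ)*b⌋ := Int.floor_le_floor hxb
    have hp1 : ((p:ℤ):ℝ) < (n:ℝ)*a + 1 := Int.ceil_lt_add_one _
    have hcast : (k0:ℝ) = max (p:ℝ) (min ((⌊(n:ℝ)*x⌋:ℤ):ℝ) ((q:ℤ):ℝ)) := by
      rw [hk0def]; push_cast; ring_nf
    have hub : (k0:ℝ) ≤ (n:ℝ)*x + 1 := by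
      rw [hcast]
      apply max_le (by linarith)
      exact le_trans (min_le_left _ _) (by linarith)
    have hlb : (n:ℝ)*x - 2 ≤ (k0:ℝ) := by
      rw [hcast]
      refine le_trans (le_min (by linarith) ?_) (le_max_right _ _)
      have : ((⌊(n:ℝ)*x⌋:ℤ):ℝ) ≤ ((⌊(n:ℝ)*b⌋:ℤ):ℝ) := by exact_mod_cast hmq
      have hq : ((q:ℤ):ℝ) = ((⌊(n:ℝ)*b⌋:ℤ):ℝ) - 1 := by rw [hqdef]; push_cast; ring
      rw [hq]; linarith
    rw [abs_le]; constructor <;> linarith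
  have hDc : c ≤ D := by
    rw [hDdef]
    exact le_trans (hφc _ hk0near) (Finset.le_sup' (fun d : ℤ => phiK σ ((n:ℝ)*x - (d:ℝ))) hk0mem)
  have hDpos : 0 < D := lt_of_lt_of_le hc hDc
  -- interval endpoints for k ∈ S
  have hkmem : ∀ k ∈ S, a ≤ (k:ℝ)/(n:ℝ) ∧ ((k:ℝ)+1)/(n:ℝ) ≤ b ∧ (k:ℝ)/(n:ℝ) ≤ ((k:ℝ)+1)/(n:ℝ) := by
    intro k hk
    obtain ⟨h1, h2⟩ := Finset.mem_Icc.1 hk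
    have h1' : (n:ℝ)*a ≤ (k:ℝ) := le_trans (Int.le_ceil _) (by exact_mod_cast h1)
    have h2' : (k:ℝ) + 1 ≤ (n:ℝ)*b := by
      have h2c : (k:ℝ) ≤ ((⌊(n:ℝ)*b⌋:ℤ):ℝ) - 1 := by
        have : ((k:ℤ):ℝ) ≤ ((q:ℤ):ℝ) := by exact_mod_cast h2
        rw [hqdef] at this; push_cast at this; linarith
      linarith [Int.floor_le ((n:ℝ)*b)]
    exact ⟨(le_div_iff₀ hnpos).2 (by linarith), (div_le_iff₀ hnpos).2 (by linarith),
      (div_le_div_iff_of_pos_right hnpos).2 (by linarith)⟩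
  have hninv : (n:ℝ) * (1/(n:ℝ)) = 1 := by field_simp
  -- near estimate
  have hAnear : ∀ k ∈ S, |(n:ℝ)*x - (k:ℝ)| ≤ (n:ℝ)*δ - 1 →
      |((n:ℝ) * ∫ u in ((k:ℝ)/(n:ℝ))..(((k:ℝ)+1)/(n:ℝ)), f u) - f x| ≤ ε := by
    intro k hk hnear
    obtain ⟨hka, hkb, hkk⟩ := hkmem k hk
    have hsub : Icc ((k:ℝ)/(n:ℝ)) (((k:ℝ)+1)/(n:ℝ)) ⊆ Icc a b := Icc_subset_Icc hka hkb
    have habs := abs_le.1 hnear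
    have humod : ∀ u ∈ Icc ((k:ℝ)/(n:ℝ)) (((k:ℝ)+1)/(n:ℝ)), |f u - f x| ≤ ε := by
      intro u hu
      apply hmod u (hsub hu)
      rw [abs_le]
      constructor
      · have h5 : x - δ ≤ (k:ℝ)/(n:ℝ) := by
          rw [le_div_iff₀ hnpos]; nlinarith [habs.2]
        linarith [hu.1]
      · have h5 : ((k:ℝ)+1)/(n:ℝ) ≤ x + δ := by
          rw [div_le_iff₀ hnpos]; nlinarith [habs.1]
        linarith [hu.2]
    obtain ⟨hlow, hup⟩ := integral_bounds f hfm hsub hkk hf01 (m := f x - ε) (M := f x + ε)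
      (fun u hu => by have := abs_le.1 (humod u hu); linarith)
      (fun u hu => by have := abs_le.1 (humod u hu); linarith)
    have hlen : ((k:ℝ)+1)/(n:ℝ) - (k:ℝ)/(n:ℝ) = 1/(n:ℝ) := by field_simp; ring
    rw [hlen] at hlow hup
    rw [abs_le]
    have h9 := mul_le_mul_of_nonneg_left hlow hnpos.le
    have h9' := mul_le_mul_of_nonneg_left hup hnpos.le
    have h10 : (n:ℝ)*((f x - ε)*(1/(n:ℝ))) = f x - ε := by field_simp
    have h10' : (n:ℝ)*((f x + ε)*(1/(n:ℝ))) = f x + ε := by field_simp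
    constructor
    · linarith
    · linarith
  -- bounds 0 ≤ A k ≤ 1
  have hA01 : ∀ k ∈ S, 0 ≤ ((n:ℝ) * ∫ u in ((k:ℝ)/(n:ℝ))..(((k:ℝ)+1)/(n:ℝ)), f u) ∧
      ((n:ℝ) * ∫ u in ((k:ℝ)/(n:ℝ))..(((k:ℝ)+1)/(n:ℝ)), f u) ≤ 1 := by
    intro k hk
    obtain ⟨hka, hkb, hkk⟩ := hkmem k hk
    have hsub : Icc ((k:ℝ)/(n:ℝ)) (((k:ℝ)+1)/(n:ℝ)) ⊆ Icc a b := Icc_subset_Icc hka hkb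
    obtain ⟨hlow, hup⟩ := integral_bounds f hfm hsub hkk hf01 (m := 0) (M := 1)
      (fun u hu => (hf01 u (hsub hu)).1) (fun u hu => (hf01 u (hsub hu)).2)
    have hlen : ((k:ℝ)+1)/(n:ℝ) - (k:ℝ)/(n:ℝ) = 1/(n:ℝ) := by field_simp; ring
    rw [hlen] at hlow hup
    have h9 := mul_le_mul_of_nonneg_left hlow hnpos.le
    have h9' := mul_le_mul_of_nonneg_left hup hnpos.le
    have h10 : (n:ℝ)*(0*(1/(n:ℝ))) = 0 := by ring
    have h10' : (n:ℝ)*(1*(1/(n:ℝ))) = 1 := by field_simp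
    constructor
    · linarith
    · linarith
  have hfx0 := (hf01 x hx).1
  have hfx1 := (hf01 x hx).2
  -- upper bound
  have hupper : (S.sup' (Finset.nonempty_Icc.2 hceil)
      (fun k => min ((n:ℝ) * ∫ u in ((k:ℝ)/(n:ℝ))..(((k:ℝ)+1)/(n:ℝ)), f u)
        (phiK σ ((n:ℝ)*x - (k:ℝ)) / D))) ≤ f x + ε := by
    apply Finset.sup'_le
    intro k hk
    rcases le_or_gt (|(n:ℝ)*x - (k:ℝ)|) ((n:ℝ)*δ - 1) with hnear | hfar
    · exact le_trans (min_le_left _ _) (by have := abs_le.1 (hAnear k hk hnear); linarith)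
    · refine le_trans (min_le_right _ _) ?_
      have hTk : T1 ≤ |(n:ℝ)*x - (k:ℝ)| := by
        have h6 : T1 ≤ T := le_max_right _ _
        linarith
      have hφsmall := hT1 _ hTk
      have hdiv : phiK σ ((n:ℝ)*x - (k:ℝ)) / D ≤ ε := by
        rw [div_le_iff₀ hDpos]
        nlinarith [hφnn ((n:ℝ)*x - (k:ℝ))]
      linarith
  -- lower bound
  obtain ⟨kstar, hksmem, hkseq⟩ :=
    Finset.exists_mem_eq_sup' (Finset.nonempty_Icc.2 hceil) (fun d : ℤ => phiK σ ((n:ℝ)*x - (d:ℝ)))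
  have hksnear : |(n:ℝ)*x - (kstar:ℝ)| ≤ (n:ℝ)*δ - 1 := by
    by_contra hcon
    push_neg at hcon
    have h7 : T0 ≤ |(n:ℝ)*x - (kstar:ℝ)| := by
      have h6 : T0 ≤ T := le_max_left _ _
      linarith
    have h8 := hT0 _ h7
    rw [← hkseq] at h8
    change D ≤ c / 2 at h8
    linarith
  have hAst := abs_le.1 (hAnear kstar hksmem hksnear)
  have hlower : f x - ε ≤ (S.sup' (Finset.nonempty_Icc.2 hceil)
      (fun k => min ((n:ℝ) * ∫ u in ((k:ℝ)/(n:ℝ))..(((k:ℝ)+1)/(n:ℝ)), f u)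
        (phiK σ ((n:ℝ)*x - (k:ℝ)) / D))) := by
    refine le_trans ?_ (Finset.le_sup' _ hksmem)
    apply le_min
    · linarith [hAst.1]
    · have hDeq : phiK σ ((n:ℝ)*x - (kstar:ℝ)) = D := by rw [hDdef, hkseq]
      rw [hDeq, div_self hDpos.ne']
      linarith
  rw [abs_le]
  exact ⟨by linarith, by linarith⟩


theorem stmt12 (σ : ℝ → ℝ) (α : ℝ) (a b : ℝ) (hab : a < b) (f : ℝ → ℝ)
    (hsig1 : Filter.Tendsto σ Filter.atBot (nhds 0))
    (hsig2 : Filter.Tendsto σ Filter.atTop (nhds 1))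
    (hmono : Monotone σ) (h31 : σ 1 < σ 3)
    (hS1 : ∀ x : ℝ, σ (-x) - 1 / 2 = -(σ x - 1 / 2))
    (hS2 : ContDiff ℝ 2 σ ∧ ConcaveOn ℝ (Set.Ici (0 : ℝ)) σ)
    (hα : 0 < α)
    (hS3 : ∃ M > (0 : ℝ), ∃ L > (0 : ℝ), ∀ x : ℝ, x ≤ -L → σ x ≤ M * |x| ^ (-(1 + α)))
    (hfm : Measurable f) (hf01 : ∀ x ∈ Set.Icc a b, f x ∈ Set.Icc (0 : ℝ) 1) :
    (∀ x ∈ Set.Icc a b, ContinuousWithinAt f (Set.Icc a b) x →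
      Filter.Tendsto (fun n : ℕ => Kmm σ a b n f x) Filter.atTop (nhds (f x))) ∧
    (ContinuousOn f (Set.Icc a b) →
      Filter.Tendsto (fun n : ℕ => ⨆ x : Set.Icc a b, |Kmm σ a b n f x - f x|)
        Filter.atTop (nhds 0)) := by

  obtain ⟨hC2, hconc⟩ := hS2
  have hσneg : ∀ x : ℝ, σ (-x) = 1 - σ x := fun x => by have := hS1 x; linarith
  have hσ0 : σ 0 = 1/2 := by have := hS1 0; norm_num at this; linarith
  have hσnn : ∀ x : ℝ, 0 ≤ σ x := fun x =>
    le_of_tendsto hsig1 (eventually_atBot.2 ⟨x, fun y hy => hmono hy⟩)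
  have hσle1 : ∀ x : ℝ, σ x ≤ 1 := fun x =>
    ge_of_tendsto hsig2 (eventually_atTop.2 ⟨x, fun y hy => hmono hy⟩)
  have hφnn : ∀ t : ℝ, 0 ≤ phiK σ t := fun t => by
    have := hmono (show t - 1 ≤ t + 1 by linarith); unfold phiK; linarith
  have hφeven : ∀ t : ℝ, phiK σ (-t) = phiK σ t := fun t => by
    unfold phiK
    have h1 : -t + 1 = -(t - 1) := by ring
    have h2 : -t - 1 = -(t + 1) := by ring
    rw [h1, h2, hσneg, hσneg]; ring
  have hσ1 : 1/2 < σ 1 := by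
    have := hconc.2 (Set.self_mem_Ici) (show (3:ℝ) ∈ Set.Ici (0:ℝ) by norm_num)
      (show (0:ℝ) ≤ 2/3 by norm_num) (show (0:ℝ) ≤ 1/3 by norm_num) (by norm_num)
    norm_num [smul_eq_mul] at this
    rw [hσ0] at this
    linarith
  have hσ2 : σ 1 < σ 2 := by
    have := hconc.2 (show (1:ℝ) ∈ Set.Ici (0:ℝ) by norm_num)
      (show (3:ℝ) ∈ Set.Ici (0:ℝ) by norm_num)
      (show (0:ℝ) ≤ 1/2 by norm_num) (show (0:ℝ) ≤ 1/2 by norm_num) (by norm_num)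
    norm_num [smul_eq_mul] at this
    linarith
  set c : ℝ := min ((σ 1 - 1/2)/2) ((σ 2 - σ 1)/2) with hcdef
  have hc : 0 < c := lt_min (by linarith) (by linarith)
  have hφc : ∀ t : ℝ, |t| ≤ 2 → c ≤ phiK σ t := by
    have base : ∀ t : ℝ, 0 ≤ t → t ≤ 2 → c ≤ phiK σ t := by
      intro t ht0 ht2
      unfold phiK
      rcases le_total t 1 with h | h
      · have m1 : σ 1 ≤ σ (t + 1) := hmono (by linarith)
        have m2 : σ (t - 1) ≤ σ 0 := hmono (by linarith)
        have := min_le_left ((σ 1 - 1/2)/2) ((σ 2 - σ 1)/2)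
        rw [hσ0] at m2; linarith [hcdef ▸ this]
      · have m1 : σ 2 ≤ σ (t + 1) := hmono (by linarith)
        have m2 : σ (t - 1) ≤ σ 1 := hmono (by linarith)
        have := min_le_right ((σ 1 - 1/2)/2) ((σ 2 - σ 1)/2)
        linarith [hcdef ▸ this]
    intro t ht
    rcases le_total 0 t with h | h
    · exact base t h (by rwa [abs_of_nonneg h] at ht)
    · rw [← hφeven]
      exact base (-t) (by linarith) (by rwa [abs_of_nonpos h] at ht)
  have htail : ∀ ε : ℝ, 0 < ε → ∃ T : ℝ, 1 ≤ T ∧ ∀ t : ℝ, T ≤ |t| → phiK σ t ≤ ε := by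
    intro ε hε
    have h2 : ∀ᶠ s in atTop, 1 - 2*ε ≤ σ s :=
      hsig2.eventually (eventually_ge_nhds (by linarith))
    have h1 : ∀ᶠ s in atBot, σ s ≤ 2*ε :=
      hsig1.eventually (eventually_le_nhds (by linarith))
    obtain ⟨T1, hT1⟩ := eventually_atTop.1 h2
    obtain ⟨T2, hT2⟩ := eventually_atBot.1 h1
    refine ⟨max 1 (max (T1 + 1) (1 - T2)), le_max_left _ _, fun t ht => ?_⟩
    rcases le_total 0 t with h | h
    · rw [abs_of_nonneg h] at ht
      have : T1 ≤ t - 1 := by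
        have := le_trans (le_max_left (T1+1) (1-T2)) (le_max_right 1 _); linarith
      have := hT1 _ this
      unfold phiK; linarith [hσle1 (t+1)]
    · rw [abs_of_nonpos h] at ht
      have : t + 1 ≤ T2 := by
        have := le_trans (le_max_right (T1+1) (1-T2)) (le_max_right 1 _); linarith
      have := hT2 _ this
      unfold phiK; linarith [hσnn (t-1)]
  have key := keylem σ a b hab f c hc hφnn hφc htail hfm hf01
  constructor
  · rintro x hx hcont
    rw [Metric.tendsto_atTop]
    intro ε hε
    have hε2 : 0 < ε/2 := by linarith
    rw [Metric.continuousWithinAt_iff] at hcont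
    obtain ⟨δ, hδ, hδprop⟩ := hcont (ε/2) hε2
    obtain ⟨N, hN⟩ := key (ε/2) hε2 (δ/2) (by linarith)
    refine ⟨N, fun n hn => ?_⟩
    have hmod : ∀ u ∈ Set.Icc a b, |u - x| ≤ δ/2 → |f u - f x| ≤ ε/2 := by
      intro u hu hd
      have hdist : dist u x < δ := by rw [Real.dist_eq]; linarith
      have := hδprop hu hdist
      rw [Real.dist_eq] at this
      linarith
    have := hN n hn x hx hmod
    rw [Real.dist_eq]
    linarith
  · intro hcont
    haveI hne : Nonempty (Set.Icc a b) := (Set.nonempty_Icc.2 hab.le).to_subtype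
    rw [Metric.tendsto_atTop]
    intro ε hε
    have hε2 : 0 < ε/2 := by linarith
    have hu := isCompact_Icc.uniformContinuousOn_of_continuous hcont
    rw [Metric.uniformContinuousOn_iff] at hu
    obtain ⟨δ, hδ, hδprop⟩ := hu (ε/2) hε2
    obtain ⟨N, hN⟩ := key (ε/2) hε2 (δ/2) (by linarith)
    refine ⟨N, fun n hn => ?_⟩
    have hbound : ∀ x : Set.Icc a b, |Kmm σ a b n f x - f x| ≤ ε/2 := by
      rintro ⟨x, hx⟩
      apply hN n hn x hx
      intro u hu' hd
      have hdist : dist u x < δ := by rw [Real.dist_eq]; linarith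
      have := hδprop u hu' x hx hdist
      rw [Real.dist_eq] at this
      linarith
    have hsup_le : (⨆ x : Set.Icc a b, |Kmm σ a b n f x - f x|) ≤ ε/2 := ciSup_le hbound
    have hbdd : BddAbove (Set.range (fun x : Set.Icc a b => |Kmm σ a b n f x - f x|)) := by
      refine ⟨ε/2, ?_⟩
      rintro y ⟨x0, rfl⟩
      exact hbound x0
    have hsup_nonneg : 0 ≤ ⨆ x : Set.Icc a b, |Kmm σ a b n f x - f x| := by
      obtain ⟨x0⟩ := hne
      exact le_trans (abs_nonneg _) (le_ciSup hbdd x0)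
    rw [Real.dist_eq, sub_zero, abs_of_nonneg hsup_nonneg]
    linarith
end

section
/- Let σ: ℝ→ℝ be a nondecreasing sigmoidal function with σ(3)>σ(1) satisfying conditions (Σ1), (Σ2) and (Σ3) with parameter α>0. Then for every β with 0 < β ≤ 1+α, the generalized absolute moment of order β of the kernel φ_σ is finite: m_β(φ_σ) := sup_{x∈ℝ} sup_{k∈ℤ} φ_σ(x-k)·|x-k|^β < ∞. -/
open Filter MeasureTheory Set

theorem stmt16 (σ : ℝ → ℝ) (α : ℝ)
    (hsig1 : Filter.Tendsto σ Filter.atBot (nhds 0))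
    (hsig2 : Filter.Tendsto σ Filter.atTop (nhds 1))
    (hmono : Monotone σ) (h31 : σ 1 < σ 3)
    (hS1 : ∀ x : ℝ, σ (-x) - 1 / 2 = -(σ x - 1 / 2))
    (hS2 : ContDiff ℝ 2 σ ∧ ConcaveOn ℝ (Set.Ici (0 : ℝ)) σ)
    (hα : 0 < α)
    (hS3 : ∃ M > (0 : ℝ), ∃ L > (0 : ℝ), ∀ x : ℝ, x ≤ -L → σ x ≤ M * |x| ^ (-(1 + α))) :
    ∀ β : ℝ, 0 < β → β ≤ 1 + α →
      ∃ C : ℝ, ∀ (x : ℝ) (k : ℤ), phiK σ (x - (k : ℝ)) * |x - (k : ℝ)| ^ β ≤ C := by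
  obtain ⟨M, hM, L, hL, hS3⟩ := hS3
  intro β hβ hβα
  have hσ0 : ∀ x, 0 ≤ σ x := by
    intro x
    refine le_of_tendsto hsig1 ?_
    filter_upwards [eventually_le_atBot x] with y hy using hmono hy
  have hσ1 : ∀ x, σ x ≤ 1 := by
    intro x
    refine ge_of_tendsto hsig2 ?_
    filter_upwards [eventually_ge_atTop x] with y hy using hmono hy
  have hsym : ∀ x, σ (-x) = 1 - σ x := by
    intro x; have := hS1 x; linarith
  set R : ℝ := L + 2 with hR
  have hR2 : (2:ℝ) ≤ R := by simp [hR]; linarith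
  have hphi_nonneg : ∀ y : ℝ, 0 ≤ phiK σ y := by
    intro y; unfold phiK
    have := hmono (show y - 1 ≤ y + 1 by linarith); linarith
  have hphi_half : ∀ y : ℝ, phiK σ y ≤ 1/2 := by
    intro y; unfold phiK
    have h1 := hσ1 (y+1); have h2 := hσ0 (y-1); linarith
  refine ⟨max (R ^ β / 2) (M * 2 ^ α), ?_⟩
  intro x k
  set y := x - (k:ℝ) with hy
  rcases le_or_gt |y| R with hcase | hcase
  · refine le_trans ?_ (le_max_left _ _)
    have h1 : |y| ^ β ≤ R ^ β := Real.rpow_le_rpow (abs_nonneg y) hcase hβ.le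
    have h2 : (0:ℝ) ≤ |y| ^ β := Real.rpow_nonneg (abs_nonneg y) β
    calc phiK σ y * |y| ^ β ≤ (1/2) * R ^ β :=
          mul_le_mul (hphi_half y) h1 h2 (by norm_num)
      _ = R ^ β / 2 := by ring
  · -- large case: |y| > R = L + 2
    refine le_trans ?_ (le_max_right _ _)
    have hyabs : (2:ℝ) < |y| := lt_of_le_of_lt hR2 hcase
    have hym1pos : 0 < |y| - 1 := by linarith
    have hhalf : |y| / 2 ≤ |y| - 1 := by linarith
    have hyhalfpos : 0 < |y| / 2 := by linarith
    -- key bound: phiK σ y ≤ M * (|y|-1) ^ (-(1+α)) / 2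
    have hkey : phiK σ y ≤ M * (|y| - 1) ^ (-(1 + α)) / 2 := by
      rcases le_or_gt 0 y with h0 | h0
      · -- y positive, |y| = y
        have hyv : |y| = y := abs_of_nonneg h0
        have hyL : L + 2 < y := by rw [hyv] at hcase; exact hcase
        have h1y : 1 - y ≤ -L := by linarith
        have hb := hS3 (1 - y) h1y
        have habs : |1 - y| = y - 1 := by rw [abs_of_nonpos (by linarith)]; ring
        rw [habs] at hb
        have hsymv : σ (1 - y) = 1 - σ (y - 1) := by
          have := hsym (y - 1); simpa [show -(y-1) = 1 - y by ring] using this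
        have hup : σ (y + 1) ≤ 1 := hσ1 _
        unfold phiK
        rw [hyv]
        have : 1 - σ (y - 1) ≤ M * (y - 1) ^ (-(1 + α)) := by rw [← hsymv]; exact hb
        linarith
      · -- y negative, |y| = -y
        have hyv : |y| = -y := abs_of_neg h0
        have hyL : L + 2 < -y := by rw [hyv] at hcase; exact hcase
        have h1y : y + 1 ≤ -L := by linarith
        have hb := hS3 (y + 1) h1y
        have habs : |y + 1| = -y - 1 := by rw [abs_of_nonpos (by linarith)]; ring
        rw [habs] at hb
        have hlow : 0 ≤ σ (y - 1) := hσ0 _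
        unfold phiK
        rw [hyv]
        linarith
    have hrn : (0:ℝ) ≤ (|y| - 1) ^ (-(1 + α)) := Real.rpow_nonneg hym1pos.le _
    have hmn : (0:ℝ) ≤ M * (|y| - 1) ^ (-(1 + α)) / 2 := by positivity
    have hbn : (0:ℝ) ≤ |y| ^ β := Real.rpow_nonneg (abs_nonneg y) β
    have step1 : phiK σ y * |y| ^ β ≤ (M * (|y| - 1) ^ (-(1 + α)) / 2) * |y| ^ β :=
      mul_le_mul_of_nonneg_right hkey hbn
    have step2 : (|y| - 1) ^ (-(1 + α)) ≤ (|y| / 2) ^ (-(1 + α)) :=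
      Real.rpow_le_rpow_of_nonpos hyhalfpos hhalf (by linarith)
    have hsplit : (|y| / 2) ^ (-(1 + α)) = |y| ^ (-(1 + α)) * 2 ^ (1 + α) := by
      rw [Real.div_rpow (by linarith) (by norm_num), Real.rpow_neg (by norm_num : (0:ℝ) ≤ 2)]
      field_simp
    have hexp : |y| ^ (-(1 + α)) * |y| ^ β = |y| ^ (β - (1 + α)) := by
      rw [← Real.rpow_add (by linarith : (0:ℝ) < |y|)]; ring_nf
    have hexple : |y| ^ (β - (1 + α)) ≤ 1 := by
      have := Real.rpow_le_rpow_of_exponent_le (by linarith : (1:ℝ) ≤ |y|)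
        (by linarith : β - (1 + α) ≤ 0)
      simpa using this
    have h2pow : (2:ℝ) ^ (1 + α) = 2 * 2 ^ α := by
      rw [Real.rpow_add (by norm_num : (0:ℝ) < 2), Real.rpow_one]
    calc phiK σ y * |y| ^ β
        ≤ (M * (|y| - 1) ^ (-(1 + α)) / 2) * |y| ^ β := step1
      _ ≤ (M * (|y| / 2) ^ (-(1 + α)) / 2) * |y| ^ β := by
          apply mul_le_mul_of_nonneg_right _ hbn
          have := mul_le_mul_of_nonneg_left step2 hM.le
          linarith
      _ = (M / 2) * 2 ^ (1 + α) * (|y| ^ (-(1 + α)) * |y| ^ β) := by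
          rw [hsplit]; ring
      _ = (M / 2) * 2 ^ (1 + α) * |y| ^ (β - (1 + α)) := by rw [hexp]
      _ ≤ (M / 2) * 2 ^ (1 + α) * 1 := by
          apply mul_le_mul_of_nonneg_left hexple
          positivity
      _ = M * 2 ^ α := by rw [h2pow]; ring
end

section
/- Let σ: ℝ→ℝ be a nondecreasing sigmoidal function with σ(3)>σ(1) satisfying conditions (Σ1), (Σ2) and (Σ3) with parameter α>0, and let a<b. Let f:[a,b]→[0,1] be continuous and let (δ_n) be a sequence of positive real numbers with δ_n → 0 and (n·δ_n)^{-1} → 0 as n→∞. Then for all sufficiently large n∈ℕ, sup_{x∈[a,b]} |K_n^(m)(f;x) - f(x)| ≤ ω_{[a,b]}(f, 1/n) + max{ ω_{[a,b]}(f, δ_n) , (m_{1+α}(φ_σ)/φ_σ(2))·(n·δ_n)^{-(1+α)} }. -/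
open Filter MeasureTheory Set

noncomputable def moment (σ : ℝ → ℝ) (β : ℝ) : ℝ :=
  ⨆ x : ℝ, ⨆ k : ℤ, phiK σ (x - (k : ℝ)) * |x - (k : ℝ)| ^ β

noncomputable def modulus (a b : ℝ) (f : ℝ → ℝ) (δ : ℝ) : ℝ :=
  sSup {y : ℝ | ∃ u ∈ Set.Icc a b, ∃ v ∈ Set.Icc a b, |u - v| ≤ δ ∧ y = |f u - f v|}

section aux
variable {σ : ℝ → ℝ}

lemma sig_le_one (hmono : Monotone σ) (h2 : Tendsto σ atTop (nhds 1)) (x : ℝ) : σ x ≤ 1 :=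
  ge_of_tendsto h2 (eventually_atTop.2 ⟨x, fun _ hy => hmono hy⟩)

lemma sig_nonneg (hmono : Monotone σ) (h1 : Tendsto σ atBot (nhds 0)) (x : ℝ) : 0 ≤ σ x :=
  le_of_tendsto h1 (eventually_atBot.2 ⟨x, fun _ hy => hmono hy⟩)

lemma sig_neg (hS1 : ∀ x : ℝ, σ (-x) - 1 / 2 = -(σ x - 1 / 2)) (x : ℝ) : σ (-x) = 1 - σ x := by
  have := hS1 x; linarith

lemma phiK_nonneg (hmono : Monotone σ) (x : ℝ) : 0 ≤ phiK σ x := by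
  have : σ (x - 1) ≤ σ (x + 1) := hmono (by linarith)
  simp only [phiK]; linarith

lemma phiK_le_half (hmono : Monotone σ) (h1 : Tendsto σ atBot (nhds 0))
    (h2 : Tendsto σ atTop (nhds 1)) (x : ℝ) : phiK σ x ≤ 1 / 2 := by
  have a1 := sig_le_one hmono h2 (x + 1)
  have a2 := sig_nonneg hmono h1 (x - 1)
  simp only [phiK]; linarith

lemma phiK_even (hS1 : ∀ x : ℝ, σ (-x) - 1 / 2 = -(σ x - 1 / 2)) (x : ℝ) :
    phiK σ (-x) = phiK σ x := by
  have e1 : σ (-x + 1) = 1 - σ (x - 1) := by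
    have := sig_neg hS1 (x - 1); rw [← this]; ring_nf
  have e2 : σ (-x - 1) = 1 - σ (x + 1) := by
    have := sig_neg hS1 (x + 1); rw [← this]; ring_nf
  simp only [phiK, e1, e2]; ring

lemma concave_comb (hc : ConcaveOn ℝ (Set.Ici (0:ℝ)) σ) {s t h : ℝ} (hs : 0 ≤ s)
    (hst : s ≤ t) (hh : 0 ≤ h) : σ s + σ (t + h) ≤ σ (s + h) + σ t := by
  rcases eq_or_lt_of_le (show s ≤ t + h by linarith) with heq | hlt
  · have h0 : h = 0 := by linarith
    have ts : t = s := by linarith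
    rw [h0, ts]; simp
  · set T := t + h - s with hT
    have hT0 : 0 < T := by simp [hT]; linarith
    have hmem1 : s ∈ Set.Ici (0:ℝ) := hs
    have hmem2 : t + h ∈ Set.Ici (0:ℝ) := by simp; linarith
    have hl1 : (0:ℝ) ≤ h / T := by positivity
    have hl2 : (0:ℝ) ≤ (t - s) / T := by
      apply div_nonneg (by linarith) (le_of_lt hT0)
    have hsum1 : (t - s) / T + h / T = 1 := by field_simp; rw [hT]; ring
    have hsum2 : h / T + (t - s) / T = 1 := by field_simp; rw [hT]; ring
    have k1 := hc.2 hmem1 hmem2 hl2 hl1 hsum1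
    have k2 := hc.2 hmem1 hmem2 hl1 hl2 hsum2
    have e1 : ((t - s) / T) • s + (h / T) • (t + h) = s + h := by
      simp only [smul_eq_mul]; field_simp; ring
    have e2 : (h / T) • s + ((t - s) / T) • (t + h) = t := by
      simp only [smul_eq_mul]; field_simp; ring
    rw [e1] at k1; rw [e2] at k2
    simp only [smul_eq_mul] at k1 k2
    have key : σ s + σ (t + h) =
        ((t - s) / T * σ s + h / T * σ (t + h)) + (h / T * σ s + (t - s) / T * σ (t + h)) := by
      linear_combination (-(σ s + σ (t + h))) * hsum1
    linarith [k1, k2]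

lemma phiK_anti (hS1 : ∀ x : ℝ, σ (-x) - 1 / 2 = -(σ x - 1 / 2))
    (hc : ConcaveOn ℝ (Set.Ici (0:ℝ)) σ) {x y : ℝ} (hx : 0 ≤ x) (hxy : x ≤ y) :
    phiK σ y ≤ phiK σ x := by
  have low : ∀ u v : ℝ, 0 ≤ u → u ≤ v → v ≤ 1 → phiK σ v ≤ phiK σ u := by
    intro u v hu huv hv1
    have key := concave_comb hc (s := 1 - v) (t := 1 + u) (h := v - u)
      (by linarith) (by linarith) (by linarith)
    have r1 : 1 + u + (v - u) = v + 1 := by ring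
    have r2 : 1 - v + (v - u) = 1 - u := by ring
    rw [r1, r2] at key
    have e1 : σ (v - 1) = 1 - σ (1 - v) := by
      have := sig_neg hS1 (1 - v); rw [← this]; ring_nf
    have e2 : σ (u - 1) = 1 - σ (1 - u) := by
      have := sig_neg hS1 (1 - u); rw [← this]; ring_nf
    simp only [phiK, e1, e2]
    have : 1 + u = u + 1 := by ring
    rw [this] at key
    linarith
  have high : ∀ u v : ℝ, 1 ≤ u → u ≤ v → phiK σ v ≤ phiK σ u := by
    intro u v hu huv
    have key := concave_comb hc (s := u - 1) (t := v - 1) (h := 2)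
      (by linarith) (by linarith) (by norm_num)
    have r1 : v - 1 + 2 = v + 1 := by ring
    have r2 : u - 1 + 2 = u + 1 := by ring
    rw [r1, r2] at key
    simp only [phiK]; linarith
  rcases le_total y 1 with hy1 | hy1
  · exact low x y hx hxy hy1
  · rcases le_total 1 x with hx1 | hx1
    · exact high x y hx1 hxy
    · exact le_trans (high 1 y le_rfl hy1) (low x 1 hx hx1 le_rfl)

lemma phiK_abs_eq (hS1 : ∀ x : ℝ, σ (-x) - 1 / 2 = -(σ x - 1 / 2)) (v : ℝ) :
    phiK σ |v| = phiK σ v := by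
  rcases abs_cases v with ⟨h1, _⟩ | ⟨h1, _⟩
  · rw [h1]
  · rw [h1, phiK_even hS1]

lemma phiK_abs_le (hS1 : ∀ x : ℝ, σ (-x) - 1 / 2 = -(σ x - 1 / 2))
    (hc : ConcaveOn ℝ (Set.Ici (0:ℝ)) σ) {u v : ℝ} (h : |u| ≤ |v|) :
    phiK σ v ≤ phiK σ u := by
  rw [← phiK_abs_eq hS1 v, ← phiK_abs_eq hS1 u]
  exact phiK_anti hS1 hc (abs_nonneg u) h

end aux

section aux2
variable {σ : ℝ → ℝ} {β C : ℝ}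

lemma le_moment (hC : ∀ u : ℝ, phiK σ u * |u| ^ β ≤ C) (u : ℝ) :
    phiK σ u * |u| ^ β ≤ moment σ β := by
  have hbdd1 : ∀ x : ℝ, BddAbove (Set.range fun k : ℤ => phiK σ (x - (k:ℝ)) * |x - (k:ℝ)| ^ β) :=
    fun x => ⟨C, by rintro y ⟨k, rfl⟩; exact hC _⟩
  have hbdd2 : BddAbove (Set.range fun x : ℝ =>
      ⨆ k : ℤ, phiK σ (x - (k:ℝ)) * |x - (k:ℝ)| ^ β) := by
    refine ⟨C, ?_⟩
    rintro y ⟨x, rfl⟩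
    exact ciSup_le fun k => hC _
  calc phiK σ u * |u| ^ β = phiK σ (u - ((0:ℤ):ℝ)) * |u - ((0:ℤ):ℝ)| ^ β := by norm_num
    _ ≤ ⨆ k : ℤ, phiK σ (u - (k:ℝ)) * |u - (k:ℝ)| ^ β := le_ciSup (hbdd1 u) 0
    _ ≤ moment σ β := le_ciSup hbdd2 u

variable {a b : ℝ} {f : ℝ → ℝ}

lemma mod_bddAbove (hf01 : ∀ x ∈ Set.Icc a b, f x ∈ Set.Icc (0 : ℝ) 1) (δ' : ℝ) :
    BddAbove {y : ℝ | ∃ u ∈ Set.Icc a b, ∃ v ∈ Set.Icc a b, |u - v| ≤ δ' ∧ y = |f u - f v|} := by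
  refine ⟨1, ?_⟩
  rintro y ⟨u, hu, v, hv, _, rfl⟩
  have h1 := hf01 u hu; have h2 := hf01 v hv
  rw [Set.mem_Icc] at h1 h2
  rw [abs_le]; constructor <;> linarith

lemma mod_ge (hf01 : ∀ x ∈ Set.Icc a b, f x ∈ Set.Icc (0 : ℝ) 1) {u v δ' : ℝ}
    (hu : u ∈ Set.Icc a b) (hv : v ∈ Set.Icc a b) (huv : |u - v| ≤ δ') :
    |f u - f v| ≤ modulus a b f δ' :=
  le_csSup (mod_bddAbove hf01 δ') ⟨u, hu, v, hv, huv, rfl⟩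

lemma mod_nonneg (hf01 : ∀ x ∈ Set.Icc a b, f x ∈ Set.Icc (0 : ℝ) 1) (hab : a ≤ b)
    {δ' : ℝ} (hδ : 0 ≤ δ') : 0 ≤ modulus a b f δ' := by
  have := mod_ge hf01 (u := a) (v := a) (δ' := δ')
    (Set.mem_Icc.2 ⟨le_rfl, hab⟩) (Set.mem_Icc.2 ⟨le_rfl, hab⟩) (by simpa using hδ)
  simpa using this

lemma mod_mono (hf01 : ∀ x ∈ Set.Icc a b, f x ∈ Set.Icc (0 : ℝ) 1) {δ₁ δ₂ : ℝ}
    (hab : a ≤ b) (h0 : 0 ≤ δ₁) (h : δ₁ ≤ δ₂) : modulus a b f δ₁ ≤ modulus a b f δ₂ := by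
  apply csSup_le
  · exact ⟨|f a - f a|, a, Set.mem_Icc.2 ⟨le_rfl, hab⟩, a, Set.mem_Icc.2 ⟨le_rfl, hab⟩,
      by simpa using h0, rfl⟩
  · rintro y ⟨u, hu, v, hv, huv, rfl⟩
    exact mod_ge hf01 hu hv (le_trans huv h)

lemma mod_subadd (hf01 : ∀ x ∈ Set.Icc a b, f x ∈ Set.Icc (0 : ℝ) 1) (hab : a ≤ b)
    {δ₁ δ₂ : ℝ} (h1 : 0 ≤ δ₁) (h2 : 0 ≤ δ₂) :
    modulus a b f (δ₁ + δ₂) ≤ modulus a b f δ₁ + modulus a b f δ₂ := by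
  have main : ∀ u v : ℝ, u ∈ Set.Icc a b → v ∈ Set.Icc a b → v ≤ u → u - v ≤ δ₁ + δ₂ →
      |f u - f v| ≤ modulus a b f δ₁ + modulus a b f δ₂ := by
    intro u v hu hv hvu hd
    set w := min (v + δ₂) u with hw
    have hwv : v ≤ w := le_min (by linarith) hvu
    have hwu : w ≤ u := min_le_right _ _
    have hwmem : w ∈ Set.Icc a b := Set.mem_Icc.2 ⟨le_trans (Set.mem_Icc.1 hv).1 hwv,
      le_trans hwu (Set.mem_Icc.1 hu).2⟩
    have e1 : |u - w| ≤ δ₁ := by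
      rw [abs_of_nonneg (by linarith)]
      rcases min_le_iff.1 (le_refl w) with _ | _
      · rcases le_total (v + δ₂) u with hc | hc
        · rw [hw, min_eq_left hc]; linarith
        · rw [hw, min_eq_right hc]; linarith
      · rcases le_total (v + δ₂) u with hc | hc
        · rw [hw, min_eq_left hc]; linarith
        · rw [hw, min_eq_right hc]; linarith
    have e2 : |w - v| ≤ δ₂ := by
      rw [abs_of_nonneg (by linarith)]
      have : w ≤ v + δ₂ := min_le_left _ _
      linarith
    calc |f u - f v| ≤ |f u - f w| + |f w - f v| := abs_sub_le _ _ _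
      _ ≤ modulus a b f δ₁ + modulus a b f δ₂ :=
        add_le_add (mod_ge hf01 hu hwmem e1) (mod_ge hf01 hwmem hv e2)
  apply csSup_le
  · exact ⟨|f a - f a|, a, Set.mem_Icc.2 ⟨le_rfl, hab⟩, a, Set.mem_Icc.2 ⟨le_rfl, hab⟩,
      by simp; linarith, rfl⟩
  · rintro y ⟨u, hu, v, hv, huv, rfl⟩
    rcases le_total v u with hc | hc
    · exact main u v hu hv hc (by rw [abs_of_nonneg (by linarith)] at huv; linarith)
    · rw [abs_sub_comm]
      exact main v u hv hu hc (by rw [abs_sub_comm, abs_of_nonneg (by linarith)] at huv; linarith)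

end aux2

section aux3
variable {σ : ℝ → ℝ}

-- we assume the helper facts proved elsewhere as hypotheses
lemma phiK_decay_bound
    (hhalf : ∀ x : ℝ, phiK σ x ≤ 1 / 2)
    (hpos : ∀ x : ℝ, 0 ≤ phiK σ x)
    (heven : ∀ x : ℝ, phiK σ |x| = phiK σ x)
    (hone : ∀ x : ℝ, σ x ≤ 1)
    (hneg : ∀ x : ℝ, σ (-x) = 1 - σ x)
    {α M L : ℝ} (hα : 0 < α) (hM : 0 < M) (hL : 0 < L)
    (hdecay : ∀ x : ℝ, x ≤ -L → σ x ≤ M * |x| ^ (-(1 + α))) (u : ℝ) :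
    phiK σ u * |u| ^ (1 + α) ≤
      max ((1 / 2) * (L + 1) ^ (1 + α)) ((M / 2) * ((L + 1) / L) ^ (1 + α)) := by
  set β := 1 + α with hβdef
  have hβ : 0 < β := by simp [hβdef]; linarith
  set w := |u| with hwdef
  have hw0 : 0 ≤ w := abs_nonneg u
  have hweq : phiK σ u * |u| ^ β = phiK σ w * w ^ β := by rw [heven u]
  rw [hweq]
  rcases le_total w (L + 1) with hcase | hcase
  · refine le_trans (le_trans ?_ (le_refl _)) (le_max_left _ _)
    have h1 : phiK σ w ≤ 1 / 2 := hhalf w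
    have h2 : w ^ β ≤ (L + 1) ^ β := Real.rpow_le_rpow hw0 hcase (le_of_lt hβ)
    have h3 : 0 ≤ w ^ β := Real.rpow_nonneg hw0 β
    nlinarith [hpos w]
  · refine le_trans ?_ (le_max_right _ _)
    have hw1 : 0 < w - 1 := by linarith
    have hsig : σ (-(w - 1)) ≤ M * (w - 1) ^ (-β) := by
      have := hdecay (-(w - 1)) (by linarith)
      rwa [abs_of_nonpos (by linarith), neg_neg] at this
    have hφ : phiK σ w ≤ M * (w - 1) ^ (-β) / 2 := by
      have e : σ (w - 1) = 1 - σ (-(w - 1)) := by rw [hneg (w - 1)]; ring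
      have h1 : σ (w + 1) ≤ 1 := hone _
      simp only [phiK]
      rw [e]
      have := hsig
      linarith
    have hprod : (w - 1) ^ (-β) * w ^ β = (w / (w - 1)) ^ β := by
      rw [Real.rpow_neg (le_of_lt hw1), Real.div_rpow (by linarith : (0:ℝ) ≤ w) (le_of_lt hw1)]
      field_simp
    have hratio : (w / (w - 1)) ^ β ≤ ((L + 1) / L) ^ β := by
      apply Real.rpow_le_rpow (by positivity) ?_ (le_of_lt hβ)
      rw [div_le_div_iff₀ hw1 hL]
      nlinarith
    calc phiK σ w * w ^ β ≤ (M * (w - 1) ^ (-β) / 2) * w ^ β := by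
          apply mul_le_mul_of_nonneg_right hφ (Real.rpow_nonneg hw0 β)
      _ = (M / 2) * ((w - 1) ^ (-β) * w ^ β) := by ring
      _ = (M / 2) * (w / (w - 1)) ^ β := by rw [hprod]
      _ ≤ (M / 2) * ((L + 1) / L) ^ β := by
          apply mul_le_mul_of_nonneg_left hratio (by positivity)

end aux3

set_option maxHeartbeats 1000000 in
theorem stmt17 (σ : ℝ → ℝ) (α : ℝ) (a b : ℝ) (hab : a < b) (f : ℝ → ℝ)
    (hsig1 : Filter.Tendsto σ Filter.atBot (nhds 0))
    (hsig2 : Filter.Tendsto σ Filter.atTop (nhds 1))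
    (hmono : Monotone σ) (h31 : σ 1 < σ 3)
    (hS1 : ∀ x : ℝ, σ (-x) - 1 / 2 = -(σ x - 1 / 2))
    (hS2 : ContDiff ℝ 2 σ ∧ ConcaveOn ℝ (Set.Ici (0 : ℝ)) σ)
    (hα : 0 < α)
    (hS3 : ∃ M > (0 : ℝ), ∃ L > (0 : ℝ), ∀ x : ℝ, x ≤ -L → σ x ≤ M * |x| ^ (-(1 + α)))
    (hfc : ContinuousOn f (Set.Icc a b))
    (hf01 : ∀ x ∈ Set.Icc a b, f x ∈ Set.Icc (0 : ℝ) 1)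
    (δ : ℕ → ℝ) (hδpos : ∀ n, 0 < δ n)
    (hδ0 : Filter.Tendsto δ Filter.atTop (nhds 0))
    (hnδ : Filter.Tendsto (fun n : ℕ => ((n : ℝ) * δ n)⁻¹) Filter.atTop (nhds 0)) :
    ∃ N : ℕ, ∀ n : ℕ, N ≤ n → ∀ x ∈ Set.Icc a b,
      |Kmm σ a b n f x - f x| ≤
        modulus a b f (1 / (n : ℝ)) +
          max (modulus a b f (δ n))
            (moment σ (1 + α) / phiK σ 2 * ((n : ℝ) * δ n) ^ (-(1 + α))) := by
  obtain ⟨M, hM, L, hL, hdecay⟩ := hS3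
  obtain ⟨-, hconc⟩ := hS2
  have habl : a ≤ b := le_of_lt hab
  -- basic sigma/phi facts
  have hone := sig_le_one hmono hsig2
  have hzero := sig_nonneg hmono hsig1
  have hneg := sig_neg hS1
  have hφpos := phiK_nonneg (σ := σ) hmono
  have hφhalf := phiK_le_half hmono hsig1 hsig2
  have hφabs := fun {u v : ℝ} (h : |u| ≤ |v|) => phiK_abs_le hS1 hconc h
  have hφ2 : 0 < phiK σ 2 := by
    have e3 : (2:ℝ) + 1 = 3 := by norm_num
    have e1 : (2:ℝ) - 1 = 1 := by norm_num
    simp only [phiK, e3, e1]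
    linarith
  set β := 1 + α with hβdef
  have hβ : 0 < β := by rw [hβdef]; linarith
  -- moment facts
  have hCle := phiK_decay_bound (σ := σ) hφhalf hφpos (phiK_abs_eq hS1) hone hneg hα hM hL hdecay
  have hmomge : ∀ u : ℝ, phiK σ u * |u| ^ β ≤ moment σ β := le_moment hCle
  have hmom0 : 0 ≤ moment σ β := by
    have := hmomge 0
    rwa [abs_zero, Real.zero_rpow (ne_of_gt hβ), mul_zero] at this
  -- choose N
  have hev1 : ∀ᶠ n : ℕ in atTop, 3 ≤ (n : ℝ) * (b - a) :=
    (tendsto_natCast_atTop_atTop.atTop_mul_const (by linarith : (0:ℝ) < b - a)).eventually_ge_atTop 3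
  have hev2 : ∀ᶠ n : ℕ in atTop, ((n : ℝ) * δ n)⁻¹ < 1 / 2 :=
    hnδ.eventually_lt_const (by norm_num : (0:ℝ) < 1 / 2)
  have hev3 : ∀ᶠ n : ℕ in atTop, 1 ≤ n := eventually_ge_atTop 1
  obtain ⟨N, hN⟩ := eventually_atTop.1 (hev1.and (hev2.and hev3))
  refine ⟨N, fun n hn x hx => ?_⟩
  obtain ⟨hcard, hinv, hn1⟩ := hN n hn
  have hnpos : (0:ℝ) < n := by exact_mod_cast Nat.lt_of_lt_of_le Nat.zero_lt_one hn1
  have hnδpos : 0 < (n:ℝ) * δ n := mul_pos hnpos (hδpos n)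
  have hnδ2 : 2 ≤ (n:ℝ) * δ n := by
    have e : ((n:ℝ) * δ n) * ((n:ℝ) * δ n)⁻¹ = 1 := mul_inv_cancel₀ (ne_of_gt hnδpos)
    nlinarith [mul_lt_mul_of_pos_left hinv hnδpos]
  have hδ2n : 2 / (n:ℝ) ≤ δ n := by
    rw [div_le_iff₀ hnpos]; nlinarith
  have hxa : a ≤ x := (Set.mem_Icc.1 hx).1
  have hxb : x ≤ b := (Set.mem_Icc.1 hx).2
  unfold Kmm
  -- integer range
  set A : ℤ := ⌈(n : ℝ) * a⌉ with hAdef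
  set B : ℤ := ⌊(n : ℝ) * b⌋ - 1 with hBdef
  have hABr : (A:ℝ) < (B:ℝ) := by
    have h1 := Int.ceil_lt_add_one ((n:ℝ) * a)
    have h2 := Int.sub_one_lt_floor ((n:ℝ) * b)
    rw [hAdef, hBdef]
    push_cast
    nlinarith
  have hAB : A ≤ B := le_of_lt (by exact_mod_cast hABr)
  have hnode : ∀ k : ℤ, A ≤ k → k ≤ B → a ≤ (k:ℝ) / n ∧ ((k:ℝ) + 1) / n ≤ b := by
    intro k h1 h2
    have hk1 : (n:ℝ) * a ≤ (k:ℝ) := by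
      refine le_trans (Int.le_ceil _) ?_
      exact_mod_cast h1
    have hk2 : (k:ℝ) + 1 ≤ (n:ℝ) * b := by
      have hkB : (k:ℝ) ≤ (B:ℝ) := by exact_mod_cast h2
      have hfl := Int.floor_le ((n:ℝ) * b)
      rw [hBdef] at hkB
      push_cast at hkB
      linarith
    constructor
    · rw [le_div_iff₀ hnpos]; linarith
    · rw [div_le_iff₀ hnpos]; linarith
  -- per-node integral facts
  have hAkfacts : ∀ k : ℤ, A ≤ k → k ≤ B →
      ((n:ℝ) * ∫ u in ((k : ℝ) / (n : ℝ))..(((k : ℝ) + 1) / (n : ℝ)), f u) ≤ 1 ∧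
      |((n:ℝ) * ∫ u in ((k : ℝ) / (n : ℝ))..(((k : ℝ) + 1) / (n : ℝ)), f u) - f x| ≤
        modulus a b f (|x - (k:ℝ)/n| + 1/n) := by
    intro k h1 h2
    obtain ⟨hc1, hc2⟩ := hnode k h1 h2
    set c₁ := (k:ℝ) / n with hc₁def
    set c₂ := ((k:ℝ) + 1) / n with hc₂def
    have hlen : c₂ - c₁ = 1 / n := by rw [hc₁def, hc₂def]; field_simp; ring
    have h1n : (0:ℝ) < 1 / n := by positivity
    have hc12 : c₁ ≤ c₂ := by linarith
    have hsub : Set.Icc c₁ c₂ ⊆ Set.Icc a b := Set.Icc_subset_Icc hc1 hc2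
    have hint : IntervalIntegrable f MeasureTheory.volume c₁ c₂ := by
      apply ContinuousOn.intervalIntegrable
      rw [Set.uIcc_of_le hc12]
      exact hfc.mono hsub
    have hmemIcc : ∀ u ∈ Set.uIoc c₁ c₂, u ∈ Set.Icc a b := by
      intro u hu
      rw [Set.uIoc_of_le hc12] at hu
      exact hsub ⟨le_of_lt hu.1, hu.2⟩
    constructor
    · have hbnd : ∀ u ∈ Set.uIoc c₁ c₂, ‖f u‖ ≤ 1 := by
        intro u hu
        have := hf01 u (hmemIcc u hu)
        rw [Set.mem_Icc] at this
        rw [Real.norm_eq_abs, abs_le]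
        exact ⟨by linarith, this.2⟩
      have hni := intervalIntegral.norm_integral_le_of_norm_le_const hbnd
      rw [Real.norm_eq_abs] at hni
      have h3 : (∫ u in c₁..c₂, f u) ≤ 1 / n := by
        have := le_trans (le_abs_self _) hni
        rw [abs_of_nonneg (by linarith : (0:ℝ) ≤ c₂ - c₁)] at this
        linarith [hlen]
      calc (n:ℝ) * ∫ u in c₁..c₂, f u ≤ (n:ℝ) * (1/n) :=
            mul_le_mul_of_nonneg_left h3 (le_of_lt hnpos)
        _ = 1 := by field_simp
    · have hdist : ∀ u ∈ Set.uIoc c₁ c₂, |u - x| ≤ |x - c₁| + 1/n := by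
        intro u hu
        rw [Set.uIoc_of_le hc12, Set.mem_Ioc] at hu
        have l1 := le_abs_self (x - c₁)
        have l2 := neg_abs_le (x - c₁)
        rw [abs_le]
        constructor
        · linarith [hu.1]
        · linarith [hu.2, hlen]
      have hbnd : ∀ u ∈ Set.uIoc c₁ c₂, ‖f u - f x‖ ≤ modulus a b f (|x - c₁| + 1/n) := by
        intro u hu
        rw [Real.norm_eq_abs]
        exact mod_ge hf01 (hmemIcc u hu) hx (hdist u hu)
      have hnorm := intervalIntegral.norm_integral_le_of_norm_le_const hbnd
      have hsplit : (∫ u in c₁..c₂, (f u - f x)) = (∫ u in c₁..c₂, f u) - (1/n) * f x := by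
        rw [intervalIntegral.integral_sub hint intervalIntegrable_const,
          intervalIntegral.integral_const, smul_eq_mul, hlen]
      rw [hsplit, Real.norm_eq_abs, abs_of_nonneg (by linarith : (0:ℝ) ≤ c₂ - c₁), hlen] at hnorm
      have key : |(n:ℝ) * ((∫ u in c₁..c₂, f u) - (1/n) * f x)| ≤
          (n:ℝ) * (modulus a b f (|x - c₁| + 1/n) * (1/n)) := by
        rw [abs_mul, abs_of_nonneg (le_of_lt hnpos)]
        exact mul_le_mul_of_nonneg_left hnorm (le_of_lt hnpos)
      have e1 : (n:ℝ) * ((∫ u in c₁..c₂, f u) - (1/n) * f x) =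
          (n:ℝ) * (∫ u in c₁..c₂, f u) - f x := by field_simp
      have e2 : (n:ℝ) * (modulus a b f (|x - c₁| + 1/n) * (1/n)) =
          modulus a b f (|x - c₁| + 1/n) := by field_simp
      rw [e1, e2] at key
      exact key
  -- the inner sup D
  set D := sSup {z : ℝ | ∃ d : ℤ, A ≤ d ∧ d ≤ B ∧ z = phiK σ ((n:ℝ) * x - (d:ℝ))} with hDdef
  have hDset_bdd : BddAbove {z : ℝ | ∃ d : ℤ, A ≤ d ∧ d ≤ B ∧ z = phiK σ ((n:ℝ) * x - (d:ℝ))} := by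
    refine ⟨1/2, ?_⟩
    rintro z ⟨d, _, _, rfl⟩
    exact hφhalf _
  have hDset_ne : {z : ℝ | ∃ d : ℤ, A ≤ d ∧ d ≤ B ∧ z = phiK σ ((n:ℝ) * x - (d:ℝ))}.Nonempty :=
    ⟨phiK σ ((n:ℝ) * x - (A:ℝ)), A, le_rfl, hAB, rfl⟩
  have hD_ge : ∀ d : ℤ, A ≤ d → d ≤ B → phiK σ ((n:ℝ) * x - (d:ℝ)) ≤ D :=
    fun d h1 h2 => le_csSup hDset_bdd ⟨d, h1, h2, rfl⟩
  -- nearest node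
  set d₀ : ℤ := max A (min B ⌊(n:ℝ) * x⌋) with hd₀def
  have hd₀1 : A ≤ d₀ := le_max_left _ _
  have hd₀2 : d₀ ≤ B := max_le hAB (min_le_left _ _)
  have hd₀close : |(n:ℝ) * x - (d₀:ℝ)| ≤ 2 := by
    have hup : (d₀:ℝ) ≤ (n:ℝ) * x + 1 := by
      rw [hd₀def]
      push_cast
      apply max_le
      · have h1 := Int.ceil_lt_add_one ((n:ℝ) * a)
        have hax : (n:ℝ) * a ≤ (n:ℝ) * x := by nlinarith
        rw [hAdef]; push_cast; linarith
      · have h1 := Int.floor_le ((n:ℝ) * x)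
        have h2 := min_le_right ((B:ℝ)) ((⌊(n:ℝ)*x⌋ : ℝ))
        linarith
    have hlo : (n:ℝ) * x - 2 ≤ (d₀:ℝ) := by
      rw [hd₀def]
      push_cast
      have h1 : (n:ℝ) * x - 2 ≤ (B:ℝ) := by
        have h3 := Int.sub_one_lt_floor ((n:ℝ) * b)
        have hxb' : (n:ℝ) * x ≤ (n:ℝ) * b := by nlinarith
        rw [hBdef]; push_cast; linarith
      have h2 : (n:ℝ) * x - 2 ≤ (⌊(n:ℝ)*x⌋ : ℝ) := by
        have := Int.sub_one_lt_floor ((n:ℝ) * x)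
        linarith
      exact le_trans (le_min h1 h2) (le_max_right _ _)
    rw [abs_le]; constructor <;> linarith
  have hDφ2 : phiK σ 2 ≤ D := by
    refine le_trans ?_ (hD_ge d₀ hd₀1 hd₀2)
    apply hφabs
    rwa [abs_two]
  have hD0 : 0 < D := lt_of_lt_of_le hφ2 hDφ2
  -- existence of a near argmax
  have hstar : ∃ k : ℤ, A ≤ k ∧ k ≤ B ∧ |(n:ℝ) * x - (k:ℝ)| ≤ 2 ∧
      phiK σ ((n:ℝ) * x - (k:ℝ)) = D := by
    have hfin : {z : ℝ | ∃ d : ℤ, A ≤ d ∧ d ≤ B ∧ z = phiK σ ((n:ℝ) * x - (d:ℝ))}.Finite := by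
      have heq : {z : ℝ | ∃ d : ℤ, A ≤ d ∧ d ≤ B ∧ z = phiK σ ((n:ℝ) * x - (d:ℝ))} =
          (fun d : ℤ => phiK σ ((n:ℝ) * x - (d:ℝ))) '' (Set.Icc A B) := by
        ext z
        simp only [Set.mem_setOf_eq, Set.mem_image, Set.mem_Icc]
        constructor
        · rintro ⟨d, h1, h2, rfl⟩; exact ⟨d, ⟨h1, h2⟩, rfl⟩
        · rintro ⟨d, ⟨h1, h2⟩, rfl⟩; exact ⟨d, h1, h2, rfl⟩
      rw [heq]
      exact (Set.finite_Icc A B).image _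
    obtain ⟨k₁, h1, h2, hk₁⟩ := hDset_ne.csSup_mem hfin
    rcases le_or_gt |(n:ℝ) * x - (k₁:ℝ)| 2 with hcl | hfar
    · exact ⟨k₁, h1, h2, hcl, hk₁.symm⟩
    · refine ⟨d₀, hd₀1, hd₀2, hd₀close, le_antisymm (hD_ge d₀ hd₀1 hd₀2) ?_⟩
      rw [hDdef.trans hk₁]
      apply hφabs
      linarith
  obtain ⟨ks, hks1, hks2, hksclose, hksD⟩ := hstar
  -- the Kmm set
  set S := {y : ℝ | ∃ k : ℤ, A ≤ k ∧ k ≤ B ∧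
    y = min ((n:ℝ) * ∫ u in ((k : ℝ) / (n : ℝ))..(((k : ℝ) + 1) / (n : ℝ)), f u)
      (phiK σ ((n:ℝ) * x - (k:ℝ)) / D)} with hSdef
  have hSne : S.Nonempty :=
    ⟨_, ⟨ks, hks1, hks2, rfl⟩⟩
  have hSbdd : BddAbove S := by
    refine ⟨1, ?_⟩
    rintro y ⟨k, h1, h2, rfl⟩
    exact le_trans (min_le_left _ _) (hAkfacts k h1 h2).1
  -- lower bound
  have hAks := hAkfacts ks hks1 hks2
  have hψ1 : phiK σ ((n:ℝ) * x - (ks:ℝ)) / D = 1 := by rw [hksD]; exact div_self (ne_of_gt hD0)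
  have hKge : ((n:ℝ) * ∫ u in ((ks : ℝ) / (n : ℝ))..(((ks : ℝ) + 1) / (n : ℝ)), f u) ≤ sSup S := by
    apply le_csSup hSbdd
    refine ⟨ks, hks1, hks2, ?_⟩
    rw [hψ1]
    exact (min_eq_left hAks.1).symm
  have hxc : |x - (ks:ℝ)/n| ≤ 2/n := by
    have e : x - (ks:ℝ)/n = ((n:ℝ) * x - (ks:ℝ)) / n := by field_simp
    rw [e, abs_div, abs_of_pos hnpos]
    gcongr
  have hmod1n : (0:ℝ) ≤ 1 / (n:ℝ) := by positivity
  have hlow : f x - sSup S ≤ modulus a b f (1/(n:ℝ)) + modulus a b f (δ n) := by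
    have h1 : f x - ((n:ℝ) * ∫ u in ((ks : ℝ) / (n : ℝ))..(((ks : ℝ) + 1) / (n : ℝ)), f u) ≤
        modulus a b f (|x - (ks:ℝ)/n| + 1/n) := by
      have h := hAks.2
      rw [abs_le] at h
      linarith [h.1]
    have h2 : modulus a b f (|x - (ks:ℝ)/n| + 1/n) ≤ modulus a b f (1/(n:ℝ) + 2/n) := by
      apply mod_mono hf01 habl (by positivity)
      linarith
    have h3 : modulus a b f (1/(n:ℝ) + 2/n) ≤ modulus a b f (1/(n:ℝ)) + modulus a b f (2/n) :=
      mod_subadd hf01 habl hmod1n (by positivity)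
    have h4 : modulus a b f (2/(n:ℝ)) ≤ modulus a b f (δ n) :=
      mod_mono hf01 habl (by positivity) hδ2n
    linarith [hKge]
  -- upper bound
  set Cterm := moment σ β / phiK σ 2 * ((n:ℝ) * δ n) ^ (-β) with hCtermdef
  have hup : sSup S ≤ f x + (modulus a b f (1/(n:ℝ)) + max (modulus a b f (δ n)) Cterm) := by
    apply csSup_le hSne
    rintro y ⟨k, h1, h2, rfl⟩
    have hAk := hAkfacts k h1 h2
    rcases le_or_gt |(n:ℝ) * x - (k:ℝ)| ((n:ℝ) * δ n) with hnear | hfar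
    · have hxk : |x - (k:ℝ)/n| ≤ δ n := by
        have e : x - (k:ℝ)/n = ((n:ℝ) * x - (k:ℝ)) / n := by field_simp
        rw [e, abs_div, abs_of_pos hnpos, div_le_iff₀ hnpos]
        nlinarith
      have hA_fx : ((n:ℝ) * ∫ u in ((k : ℝ) / (n : ℝ))..(((k : ℝ) + 1) / (n : ℝ)), f u) - f x ≤
          modulus a b f (|x - (k:ℝ)/n| + 1/n) := by
        have h := hAk.2; rw [abs_le] at h; linarith [h.2]
      have hm1 : modulus a b f (|x - (k:ℝ)/n| + 1/n) ≤ modulus a b f (δ n + 1/n) :=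
        mod_mono hf01 habl (by positivity) (by linarith)
      have hm2 : modulus a b f (δ n + 1/(n:ℝ)) ≤ modulus a b f (δ n) + modulus a b f (1/(n:ℝ)) :=
        mod_subadd hf01 habl (le_of_lt (hδpos n)) hmod1n
      have hmin := min_le_left ((n:ℝ) * ∫ u in ((k : ℝ) / (n : ℝ))..(((k : ℝ) + 1) / (n : ℝ)), f u)
        (phiK σ ((n:ℝ) * x - (k:ℝ)) / D)
      have hmax := le_max_left (modulus a b f (δ n)) Cterm
      linarith
    · have hu0 : 0 < |(n:ℝ) * x - (k:ℝ)| := lt_trans hnδpos hfar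
      have hrp : 0 < |(n:ℝ) * x - (k:ℝ)| ^ β := Real.rpow_pos_of_pos hu0 β
      have hφu : phiK σ ((n:ℝ) * x - (k:ℝ)) ≤ moment σ β * ((n:ℝ) * δ n) ^ (-β) := by
        have s1 : phiK σ ((n:ℝ) * x - (k:ℝ)) ≤ moment σ β / |(n:ℝ) * x - (k:ℝ)| ^ β := by
          rw [le_div_iff₀ hrp]
          exact hmomge _
        have s2 : moment σ β / |(n:ℝ) * x - (k:ℝ)| ^ β =
            moment σ β * |(n:ℝ) * x - (k:ℝ)| ^ (-β) := by
          rw [Real.rpow_neg (abs_nonneg _)]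
          ring
        have s3 : |(n:ℝ) * x - (k:ℝ)| ^ (-β) ≤ ((n:ℝ) * δ n) ^ (-β) :=
          Real.rpow_le_rpow_of_nonpos hnδpos (le_of_lt hfar) (by linarith)
        calc phiK σ ((n:ℝ) * x - (k:ℝ)) ≤ moment σ β * |(n:ℝ) * x - (k:ℝ)| ^ (-β) := by
              rw [← s2]; exact s1
          _ ≤ moment σ β * ((n:ℝ) * δ n) ^ (-β) := mul_le_mul_of_nonneg_left s3 hmom0
      have hψ : phiK σ ((n:ℝ) * x - (k:ℝ)) / D ≤ Cterm := by
        have t1 : phiK σ ((n:ℝ) * x - (k:ℝ)) / D ≤ phiK σ ((n:ℝ) * x - (k:ℝ)) / phiK σ 2 :=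
          div_le_div_of_nonneg_left (hφpos _) hφ2 hDφ2
        have t2 : phiK σ ((n:ℝ) * x - (k:ℝ)) / phiK σ 2 ≤
            (moment σ β * ((n:ℝ) * δ n) ^ (-β)) / phiK σ 2 := by gcongr
        refine le_trans t1 (le_trans t2 (le_of_eq ?_))
        rw [hCtermdef]; ring
      have hmin := min_le_right ((n:ℝ) * ∫ u in ((k : ℝ) / (n : ℝ))..(((k : ℝ) + 1) / (n : ℝ)), f u)
        (phiK σ ((n:ℝ) * x - (k:ℝ)) / D)
      have hfx0 : 0 ≤ f x := (Set.mem_Icc.1 (hf01 x hx)).1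
      have hmod0' : 0 ≤ modulus a b f (1/(n:ℝ)) := mod_nonneg hf01 habl hmod1n
      have hmax := le_max_right (modulus a b f (δ n)) Cterm
      linarith
  rw [abs_le]
  constructor
  · have hmax := le_max_left (modulus a b f (δ n)) Cterm
    linarith [hlow]
  · linarith [hup]
end
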